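/- arXiv:1010.3778 — 8 statements merged into one kernel-verified Lean document; each statement's English description precedes it below -/
import Mathlib

section
/- Let G be a second-countable topological group equipped with its Borel σ-algebra, Γ ≤ G a countable subgroup, Y a standard Borel space with an action of Γ by Borel automorphisms, and ψ : G → Y a Borel map with the property that for every γ ∈ Γ there exists a neighborhood V of the identity of G such that ψ(γ z γ⁻¹) = γ · ψ(z) for all z ∈ V with z ≠ 1. Let X ⊆ G be a Borel set, η a Borel probability measure on X, c > 0, and (μ_n) a sequence of Borel probability measures on X × X such that: μ_n(Δ) = 0 for all n; the first marginal of μ_n is dominated by c·η for all n; and μ_n(A × (X∖A)) → 0 for every Borel subset A ⊆ X. Let φ₁, φ₂ : X → Γ be Borel maps, and let D be the set of pairs (x,y) ∈ (X × X)∖Δ such that ψ( φ₁(x) · x · φ₂(x) · φ₂(y)⁻¹ · y⁻¹ · φ₁(y)⁻¹ ) = φ₁(x) · ψ(x y⁻¹). Then lim_{n→∞} μ_n(D) = 1. -/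
open MeasureTheory Filter Topology
open scoped NNReal ENNReal

theorem lemmaF
    -- G a second-countable topological group with its Borel σ-algebra
    (G : Type*) [Group G] [TopologicalSpace G] [IsTopologicalGroup G]
    [SecondCountableTopology G] [MeasurableSpace G] [BorelSpace G]
    -- Γ a countable subgroup of G
    (Γ : Subgroup G) (hΓcount : Countable Γ)
    -- Y a standard Borel space with an action of Γ by Borel automorphisms
    (Y : Type*) [MeasurableSpace Y] [StandardBorelSpace Y] [MulAction Γ Y]
    (hact : ∀ γ : Γ, Measurable (fun y : Y => γ • y))
    -- ψ : G → Y a Borel map which is locally Γ-equivariant near the identity: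
    (ψ : G → Y) (hψ : Measurable ψ)
    (hequiv : ∀ γ : Γ, ∃ V ∈ 𝓝 (1 : G), ∀ z ∈ V, z ≠ 1 →
      ψ ((γ : G) * z * (γ : G)⁻¹) = γ • ψ z)
    -- X ⊆ G a Borel set with a Borel probability measure η
    (X : Set G) (hX : MeasurableSet X)
    (η : Measure X) (hη : IsProbabilityMeasure η)
    -- the constant c > 0 and the sequence of measures μ_n on X × X
    (c : ℝ≥0) (hc : 0 < c)
    (μ : ℕ → Measure (X × X)) (hμprob : ∀ n, IsProbabilityMeasure (μ n))
    -- μ_n gives no mass to the diagonal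
    (hdiag : ∀ n, μ n (Set.diagonal X) = 0)
    -- the first marginal of μ_n is dominated by c·η
    (hmarg : ∀ n, (μ n).map Prod.fst ≤ c • η)
    -- μ_n(A × (X∖A)) → 0 for every Borel A ⊆ X
    (hsplit : ∀ A : Set X, MeasurableSet A →
      Tendsto (fun n => ((μ n) (A ×ˢ Aᶜ)).toReal) atTop (𝓝 0))
    -- φ₁, φ₂ : X → Γ Borel maps (preimages of points are Borel)
    (φ₁ φ₂ : X → Γ)
    (hφ₁ : ∀ γ : Γ, MeasurableSet (φ₁ ⁻¹' {γ})) (hφ₂ : ∀ γ : Γ, MeasurableSet (φ₂ ⁻¹' {γ}))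
    -- D = the set of off-diagonal pairs on which ψ intertwines as expected
    (D : Set (X × X))
    (hD : D = {p : X × X | p.1 ≠ p.2 ∧
      ψ ((φ₁ p.1 : G) * (p.1 : G) * (φ₂ p.1 : G) * ((φ₂ p.2 : G))⁻¹ * ((p.2 : G))⁻¹ *
          ((φ₁ p.2 : G))⁻¹) =
        (φ₁ p.1) • ψ ((p.1 : G) * ((p.2 : G))⁻¹)}) :
    Tendsto (fun n => ((μ n) D).toReal) atTop (𝓝 1) := by
  classical
  -- choose the equivariance neighborhoods
  choose V hVnhds hVeq using hequiv
  -- a countable topological basis of G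
  obtain ⟨b, hbc, -, hb⟩ := TopologicalSpace.exists_countable_basis G
  haveI : Countable b := hbc.to_subtype
  -- the index type of the pieces
  let ι : Type _ := Γ × Γ × b
  -- the pieces of the countable cover
  let piece : ι → Set X := fun i =>
    if ∀ a ∈ (i.2.2 : Set G), ∀ d ∈ (i.2.2 : Set G), a * d⁻¹ ∈ V i.1
    then φ₁ ⁻¹' {i.1} ∩ φ₂ ⁻¹' {i.2.1} ∩ (Subtype.val ⁻¹' (i.2.2 : Set G))
    else ∅
  have hpiece_meas : ∀ i, MeasurableSet (piece i) := by
    intro i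
    by_cases h : ∀ a ∈ (i.2.2 : Set G), ∀ d ∈ (i.2.2 : Set G), a * d⁻¹ ∈ V i.1
    · simp only [piece, if_pos h]
      exact ((hφ₁ _).inter (hφ₂ _)).inter
        ((hb.isOpen i.2.2.2).measurableSet.preimage measurable_subtype_coe)
    · simp only [piece, if_neg h]
      exact MeasurableSet.empty
  have hpiece_good : ∀ i, ∀ x ∈ piece i, ∀ y ∈ piece i, x ≠ y → (x, y) ∈ D := by
    intro i x hx y hy hxy
    by_cases h : ∀ a ∈ (i.2.2 : Set G), ∀ d ∈ (i.2.2 : Set G), a * d⁻¹ ∈ V i.1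
    · simp only [piece, if_pos h] at hx hy
      obtain ⟨⟨hx1, hx2⟩, hx3⟩ := hx
      obtain ⟨⟨hy1, hy2⟩, hy3⟩ := hy
      have hx1 : φ₁ x = i.1 := hx1
      have hx2 : φ₂ x = i.2.1 := hx2
      have hy1 : φ₁ y = i.1 := hy1
      have hy2 : φ₂ y = i.2.1 := hy2
      have hz : (x : G) * (y : G)⁻¹ ∈ V i.1 := h _ hx3 _ hy3
      have hz1 : (x : G) * (y : G)⁻¹ ≠ 1 := by
        intro hcon
        exact hxy (Subtype.ext (by
          have := mul_inv_eq_one.mp hcon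
          exact this))
      rw [hD]
      refine ⟨hxy, ?_⟩
      have key := hVeq i.1 _ hz hz1
      have harg : (φ₁ x : G) * (x : G) * (φ₂ x : G) * ((φ₂ y : G))⁻¹ * ((y : G))⁻¹ *
          ((φ₁ y : G))⁻¹ = (i.1 : G) * ((x : G) * (y : G)⁻¹) * ((i.1 : G))⁻¹ := by
        rw [hx1, hx2, hy1, hy2]
        group
      rw [harg, key, hx1]
    · simp only [piece, if_neg h] at hx
      exact absurd hx (Set.notMem_empty x)
  have hpiece_cover : ∀ x : X, ∃ i, x ∈ piece i := by
    intro x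
    have h1 : Continuous fun p : G × G => p.1 * p.2⁻¹ :=
      continuous_fst.mul continuous_snd.inv
    have hmem : {p : G × G | p.1 * p.2⁻¹ ∈ V (φ₁ x)} ∈ 𝓝 ((x : G), (x : G)) := by
      have := h1.continuousAt (x := ((x : G), (x : G))) |>.preimage_mem_nhds
        (by simpa using hVnhds (φ₁ x))
      exact this
    obtain ⟨U₁, hU₁, U₂, hU₂, hU⟩ := mem_nhds_prod_iff.1 hmem
    have hU' : U₁ ∩ U₂ ∈ 𝓝 (x : G) := Filter.inter_mem hU₁ hU₂
    obtain ⟨B, hBb, hxB, hBU⟩ := hb.mem_nhds_iff.1 hU'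
    refine ⟨(φ₁ x, φ₂ x, ⟨B, hBb⟩), ?_⟩
    have hcond : ∀ a ∈ B, ∀ d ∈ B, a * d⁻¹ ∈ V (φ₁ x) := by
      intro a ha d hd
      exact hU (Set.mk_mem_prod (hBU ha).1 (hBU hd).2)
    simp only [piece, if_pos hcond]
    exact ⟨⟨rfl, rfl⟩, hxB⟩
  -- enumerate the pieces and disjointify them
  haveI : Nonempty ι := by
    obtain ⟨B, hBb, -, -⟩ := hb.exists_subset_of_mem_open (Set.mem_univ (1 : G)) isOpen_univ
    exact ⟨(1, 1, ⟨B, hBb⟩)⟩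
  obtain ⟨f, hf⟩ := exists_surjective_nat ι
  set Q : ℕ → Set X := disjointed (piece ∘ f) with hQdef
  have hQmeas : ∀ k, MeasurableSet (Q k) :=
    MeasurableSet.disjointed (fun k => hpiece_meas (f k))
  have hQdisj : Pairwise (Function.onFun Disjoint Q) := disjoint_disjointed _
  have hQsub : ∀ k, Q k ⊆ piece (f k) := fun k => disjointed_subset _ k
  have hQcover : ∀ x : X, ∃ k, x ∈ Q k := by
    intro x
    obtain ⟨i, hi⟩ := hpiece_cover x
    obtain ⟨k, rfl⟩ := hf i
    have : x ∈ ⋃ k, Q k := by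
      rw [hQdef, iUnion_disjointed]
      exact Set.mem_iUnion.2 ⟨k, hi⟩
    exact Set.mem_iUnion.1 this
  -- tail sets
  set R : ℕ → Set X := fun N => ⋃ (k : ℕ) (_ : N ≤ k), Q k with hRdef
  have hRmeas : ∀ N, MeasurableSet (R N) := fun N =>
    MeasurableSet.iUnion fun k => MeasurableSet.iUnion fun _ => hQmeas k
  have hRanti : Antitone R := by
    intro N M hNM x hx
    obtain ⟨k, hk, hxk⟩ := Set.mem_iUnion₂.1 hx
    exact Set.mem_iUnion₂.2 ⟨k, le_trans hNM hk, hxk⟩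
  have hRempty : ⋂ N, R N = ∅ := by
    rw [Set.eq_empty_iff_forall_notMem]
    intro x hx
    obtain ⟨k₀, hk₀⟩ := hQcover x
    have hx1 := Set.mem_iInter.1 hx (k₀ + 1)
    obtain ⟨k, hk, hxk⟩ := Set.mem_iUnion₂.1 hx1
    have hne : k₀ ≠ k := by omega
    exact Set.disjoint_left.1 (hQdisj hne) hk₀ hxk
  have hηR : Tendsto (fun N => η (R N)) atTop (𝓝 0) := by
    have h := tendsto_measure_iInter_atTop (μ := η)
      (fun N => (hRmeas N).nullMeasurableSet) hRanti ⟨0, measure_ne_top η _⟩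
    rw [hRempty, measure_empty] at h
    exact h
  -- the key quantity
  set T : ℕ → ℝ≥0∞ := fun n => μ n (⋃ k, Q k ×ˢ (Q k)ᶜ) with hTdef
  have hTne : ∀ n, T n ≠ ⊤ := fun n => measure_ne_top (μ n) _
  -- μ n Dᶜ ≤ T n
  have hDc : ∀ n, μ n Dᶜ ≤ T n := by
    intro n
    have hsub : Dᶜ ⊆ Set.diagonal X ∪ ⋃ k, Q k ×ˢ (Q k)ᶜ := by
      intro p hp
      by_cases hpd : p.1 = p.2
      · left
        exact Set.mem_diagonal_iff.2 hpd
      · right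
        obtain ⟨k, hk⟩ := hQcover p.1
        refine Set.mem_iUnion.2 ⟨k, hk, ?_⟩
        intro hk2
        exact hp (hpiece_good (f k) _ (hQsub k hk) _ (hQsub k hk2) hpd)
    calc μ n Dᶜ ≤ μ n (Set.diagonal X ∪ ⋃ k, Q k ×ˢ (Q k)ᶜ) := measure_mono hsub
      _ ≤ μ n (Set.diagonal X) + μ n (⋃ k, Q k ×ˢ (Q k)ᶜ) := measure_union_le _ _
      _ = T n := by rw [hdiag n, zero_add]
  -- T n → 0
  have hT0 : Tendsto T atTop (𝓝 0) := by
    rw [ENNReal.tendsto_nhds_zero]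
    intro ε hε
    have hcne : (c : ℝ≥0∞) ≠ 0 := by
      simpa using hc.ne'
    have hctop : (c : ℝ≥0∞) ≠ ⊤ := ENNReal.coe_ne_top
    have hδpos : (0 : ℝ≥0∞) < ε / 2 / c :=
      ENNReal.div_pos (by simpa using (ENNReal.half_pos hε.ne').ne') hctop
    obtain ⟨N, hN⟩ := ((ENNReal.tendsto_nhds_zero.mp hηR) _ hδpos).exists
    have hRN : (c : ℝ≥0∞) * η (R N) ≤ ε / 2 := by
      calc (c : ℝ≥0∞) * η (R N) ≤ (c : ℝ≥0∞) * (ε / 2 / c) := mul_le_mul_right hN _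
        _ = ε / 2 := ENNReal.mul_div_cancel' (fun h => absurd h hcne) (fun h => absurd h hctop)
    -- finite sum tends to zero
    have hsum : Tendsto (fun n => ∑ k ∈ Finset.range N, μ n (Q k ×ˢ (Q k)ᶜ))
        atTop (𝓝 0) := by
      have h0 : Tendsto (fun n => ∑ k ∈ Finset.range N, μ n (Q k ×ˢ (Q k)ᶜ))
          atTop (𝓝 (∑ k ∈ Finset.range N, 0)) := by
        refine tendsto_finset_sum _ (fun k _ => ?_)
        have := hsplit (Q k) (hQmeas k)
        have h' := (ENNReal.tendsto_toReal_iff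
          (fun n => measure_ne_top (μ n) _) (x := 0) (by simp)).1 (by simpa using this)
        exact h'
      simpa using h0
    have hev : ∀ᶠ n in atTop, ∑ k ∈ Finset.range N, μ n (Q k ×ˢ (Q k)ᶜ) ≤ ε / 2 :=
      (ENNReal.tendsto_nhds_zero.mp hsum) _ (ENNReal.half_pos hε.ne')
    filter_upwards [hev] with n hn
    -- bound T n
    have hincl : (⋃ k, Q k ×ˢ (Q k)ᶜ) ⊆
        (⋃ k ∈ Finset.range N, Q k ×ˢ (Q k)ᶜ) ∪ (R N ×ˢ (Set.univ : Set X)) := by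
      intro p hp
      obtain ⟨k, hk⟩ := Set.mem_iUnion.1 hp
      by_cases hkN : k < N
      · left
        exact Set.mem_biUnion (Finset.mem_range.2 hkN) hk
      · right
        exact ⟨Set.mem_iUnion₂.2 ⟨k, by omega, hk.1⟩, Set.mem_univ _⟩
    have hmargN : μ n (R N ×ˢ (Set.univ : Set X)) ≤ (c : ℝ≥0∞) * η (R N) := by
      rw [Set.prod_univ]
      have h1 : μ n (Prod.fst ⁻¹' R N) = ((μ n).map Prod.fst) (R N) :=
        (Measure.map_apply measurable_fst (hRmeas N)).symm
      rw [h1]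
      have h2 := Measure.le_iff'.1 (hmarg n) (R N)
      rw [Measure.smul_apply, ENNReal.smul_def, smul_eq_mul] at h2
      exact h2
    calc T n ≤ μ n ((⋃ k ∈ Finset.range N, Q k ×ˢ (Q k)ᶜ) ∪ (R N ×ˢ (Set.univ : Set X))) :=
          measure_mono hincl
      _ ≤ μ n (⋃ k ∈ Finset.range N, Q k ×ˢ (Q k)ᶜ) + μ n (R N ×ˢ (Set.univ : Set X)) :=
          measure_union_le _ _
      _ ≤ (∑ k ∈ Finset.range N, μ n (Q k ×ˢ (Q k)ᶜ)) + (c : ℝ≥0∞) * η (R N) :=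
          add_le_add (measure_biUnion_finset_le _ _) hmargN
      _ ≤ ε / 2 + ε / 2 := add_le_add hn hRN
      _ = ε := ENNReal.add_halves ε
  -- pass to real numbers
  have hTr : Tendsto (fun n => (T n).toReal) atTop (𝓝 0) := by
    have := (ENNReal.tendsto_toReal_iff hTne (x := 0) (by simp)).2 hT0
    simpa using this
  -- squeeze
  have hup : ∀ n, ((μ n) D).toReal ≤ 1 := by
    intro n
    have : μ n D ≤ 1 := prob_le_one
    calc ((μ n) D).toReal ≤ (1 : ℝ≥0∞).toReal :=
        ENNReal.toReal_mono (by simp) this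
      _ = 1 := by simp
  have hlow : ∀ n, 1 - (T n).toReal ≤ ((μ n) D).toReal := by
    intro n
    have h1 : (1 : ℝ≥0∞) ≤ μ n D + T n := by
      calc (1 : ℝ≥0∞) = μ n Set.univ := (measure_univ).symm
        _ = μ n (D ∪ Dᶜ) := by rw [Set.union_compl_self]
        _ ≤ μ n D + μ n Dᶜ := measure_union_le _ _
        _ ≤ μ n D + T n := add_le_add le_rfl (hDc n)
    have h2 : (1 : ℝ) ≤ ((μ n) D).toReal + (T n).toReal := by
      have h3 := ENNReal.toReal_mono
        (ENNReal.add_ne_top.2 ⟨measure_ne_top (μ n) D, hTne n⟩) h1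
      rwa [ENNReal.toReal_add (measure_ne_top (μ n) D) (hTne n), ENNReal.toReal_one] at h3
    linarith
  have hlowt : Tendsto (fun n => 1 - (T n).toReal) atTop (𝓝 1) := by
    have := (tendsto_const_nhds (x := (1:ℝ)) (f := atTop)).sub hTr
    simpa using this
  exact tendsto_of_tendsto_of_tendsto_of_le_of_le hlowt tendsto_const_nhds hlow hup
end

section
/- Let X be a measurable space, η a probability measure on X, c > 0, and (μ_n) a sequence of probability measures on X × X such that the first marginal of μ_n is dominated by c·η for all n, and μ_n(A × (X∖A)) → 0 for every measurable subset A ⊆ X. Then for every countable measurable partition {B_i}_{i=1}^∞ of X, one has μ_n( ⋃_{i=1}^∞ (B_i × B_i) ) → 1 as n → ∞. -/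
open MeasureTheory Filter Topology
open scoped NNReal ENNReal

theorem partition_claim
    (X : Type*) [MeasurableSpace X]
    (η : Measure X) (hη : IsProbabilityMeasure η)
    (c : ℝ≥0) (hc : 0 < c)
    (μ : ℕ → Measure (X × X)) (hμprob : ∀ n, IsProbabilityMeasure (μ n))
    -- the first marginal of μ_n is dominated by c·η
    (hmarg : ∀ n, (μ n).map Prod.fst ≤ c • η)
    -- μ_n(A × (X∖A)) → 0 for every measurable A ⊆ X
    (hsplit : ∀ A : Set X, MeasurableSet A →
      Tendsto (fun n => ((μ n) (A ×ˢ Aᶜ)).toReal) atTop (𝓝 0))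
    -- a countable measurable partition {B_i} of X
    (B : ℕ → Set X) (hBmeas : ∀ i, MeasurableSet (B i))
    (hBdisj : Pairwise (Function.onFun Disjoint B)) (hBcover : ⋃ i, B i = Set.univ) :
    Tendsto (fun n => ((μ n) (⋃ i, B i ×ˢ B i)).toReal) atTop (𝓝 1) := by
  have hmeasBB : ∀ i, MeasurableSet (B i ×ˢ (B i)ᶜ) :=
    fun i => (hBmeas i).prod (hBmeas i).compl
  set S : Set (X × X) := ⋃ i, B i ×ˢ (B i)ᶜ with hS
  have hSmeas : MeasurableSet S := MeasurableSet.iUnion hmeasBB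
  have hcompl : (⋃ i, B i ×ˢ B i)ᶜ = S := by
    ext ⟨x, y⟩
    simp only [hS, Set.mem_compl_iff, Set.mem_iUnion, Set.mem_prod, Set.mem_compl_iff,
      not_exists, not_and]
    constructor
    · intro h
      obtain ⟨i, hxi⟩ : ∃ i, x ∈ B i :=
        Set.mem_iUnion.mp (hBcover.symm ▸ Set.mem_univ x)
      exact ⟨i, hxi, h i hxi⟩
    · rintro ⟨i, hxi, hyi⟩ j hxj hyj
      rcases eq_or_ne j i with rfl | hne
      · exact hyi hyj
      · exact Set.disjoint_left.mp (hBdisj hne) hxj hxi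
  -- tails
  set T : ℕ → Set X := fun k => ⋃ i, B (i + k) with hT
  have hTmeas : ∀ k, MeasurableSet (T k) := fun k => MeasurableSet.iUnion fun i => hBmeas _
  have hηT : Tendsto (fun k => (c : ℝ≥0∞) * η (T k)) atTop (𝓝 0) := by
    have hsum : ∀ k, η (T k) = ∑' i, η (B (i + k)) := by
      intro k
      refine measure_iUnion ?_ (fun i => hBmeas _)
      intro i j hij
      exact hBdisj (by omega)
    have htot : ∑' i, η (B i) ≠ ∞ := by
      rw [← measure_iUnion hBdisj hBmeas]
      exact measure_ne_top η _
    have : Tendsto (fun k => η (T k)) atTop (𝓝 0) := by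
      simp only [hsum]
      exact ENNReal.tendsto_sum_nat_add _ htot
    have h2 := ENNReal.Tendsto.const_mul (a := (c : ℝ≥0∞)) this (Or.inr ENNReal.coe_ne_top)
    rwa [mul_zero] at h2
  -- main: μ n S → 0 in ℝ≥0∞
  have hmain : Tendsto (fun n => μ n S) atTop (𝓝 0) := by
    rw [ENNReal.tendsto_nhds_zero]
    intro ε hε
    have hε2 : (0 : ℝ≥0∞) < ε / 2 := ENNReal.half_pos hε.ne'
    obtain ⟨k, hk⟩ := (hηT.eventually_lt_const hε2).exists
    -- finite sums tend to 0
    have hfin : Tendsto (fun n => ∑ i ∈ Finset.range k, μ n (B i ×ˢ (B i)ᶜ)) atTop (𝓝 0) := by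
      have : Tendsto (fun n => ∑ i ∈ Finset.range k, μ n (B i ×ˢ (B i)ᶜ)) atTop
          (𝓝 (∑ i ∈ Finset.range k, 0)) := by
        refine tendsto_finset_sum _ fun i _ => ?_
        have := hsplit (B i) (hBmeas i)
        rw [← ENNReal.tendsto_toReal_iff (fun n => measure_ne_top (μ n) _) ENNReal.zero_ne_top]
        simpa using this
      simpa using this
    have hev := hfin.eventually_le_const hε2
    filter_upwards [hev] with n hn
    have hsub : S ⊆ (⋃ i ∈ Finset.range k, B i ×ˢ (B i)ᶜ) ∪ (T k ×ˢ Set.univ) := by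
      rintro ⟨x, y⟩ hxy
      obtain ⟨i, hxi, hyi⟩ := Set.mem_iUnion.mp hxy
      rcases lt_or_ge i k with hik | hik
      · exact Or.inl (Set.mem_biUnion (Finset.mem_range.mpr hik) ⟨hxi, hyi⟩)
      · refine Or.inr ⟨Set.mem_iUnion.mpr ⟨i - k, ?_⟩, Set.mem_univ _⟩
        rwa [Nat.sub_add_cancel hik]
    have hTk : μ n (T k ×ˢ Set.univ) ≤ (c : ℝ≥0∞) * η (T k) := by
      have hpre : T k ×ˢ (Set.univ : Set X) = Prod.fst ⁻¹' T k := by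
        ext ⟨x, y⟩; simp
      calc μ n (T k ×ˢ Set.univ) = ((μ n).map Prod.fst) (T k) := by
            rw [Measure.map_apply measurable_fst (hTmeas k), hpre]
        _ ≤ (c • η) (T k) := hmarg n (T k)
        _ = (c : ℝ≥0∞) * η (T k) := by simp
    calc μ n S ≤ μ n ((⋃ i ∈ Finset.range k, B i ×ˢ (B i)ᶜ) ∪ (T k ×ˢ Set.univ)) :=
          measure_mono hsub
      _ ≤ μ n (⋃ i ∈ Finset.range k, B i ×ˢ (B i)ᶜ) + μ n (T k ×ˢ Set.univ) :=
          measure_union_le _ _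
      _ ≤ (∑ i ∈ Finset.range k, μ n (B i ×ˢ (B i)ᶜ)) + (c : ℝ≥0∞) * η (T k) :=
          add_le_add (measure_biUnion_finset_le _ _) hTk
      _ ≤ ε / 2 + ε / 2 := add_le_add hn hk.le
      _ = ε := ENNReal.add_halves ε
  -- conclude
  have heq : ∀ n, ((μ n) (⋃ i, B i ×ˢ B i)).toReal = 1 - (μ n S).toReal := by
    intro n
    have hU : (⋃ i, B i ×ˢ B i) = Sᶜ := by
      rw [← hcompl, compl_compl]
    rw [hU, prob_compl_eq_one_sub hSmeas,
      ENNReal.toReal_sub_of_le prob_le_one ENNReal.one_ne_top, ENNReal.toReal_one]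
  simp only [heq]
  have : Tendsto (fun n => (μ n S).toReal) atTop (𝓝 0) := by
    simpa [Function.comp_def] using (ENNReal.tendsto_toReal ENNReal.zero_ne_top).comp hmain
  simpa using (tendsto_const_nhds.sub this : Tendsto (fun n => 1 - (μ n S).toReal) atTop (𝓝 (1 - 0)))
end

section
/- Let G be a second-countable topological group equipped with its Borel σ-algebra, X ⊆ G a Borel set, η a Borel probability measure on X, c > 0, and (μ_n) a sequence of Borel probability measures on X × X such that the first marginal of μ_n is dominated by c·η for all n, and μ_n(A × (X∖A)) → 0 for every Borel subset A ⊆ X. Then for every neighborhood V of the identity in G, μ_n( {(x,y) ∈ X × X : x y⁻¹ ∈ V} ) → 1 as n → ∞. -/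
open MeasureTheory Filter Topology
open scoped NNReal ENNReal
open Set

theorem neighborhood_claim
    -- G a second-countable topological group with its Borel σ-algebra
    (G : Type*) [Group G] [TopologicalSpace G] [IsTopologicalGroup G]
    [SecondCountableTopology G] [MeasurableSpace G] [BorelSpace G]
    -- X ⊆ G a Borel set with a Borel probability measure η
    (X : Set G) (hX : MeasurableSet X)
    (η : Measure X) (hη : IsProbabilityMeasure η)
    (c : ℝ≥0) (hc : 0 < c)
    (μ : ℕ → Measure (X × X)) (hμprob : ∀ n, IsProbabilityMeasure (μ n))
    -- the first marginal of μ_n is dominated by c·η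
    (hmarg : ∀ n, (μ n).map Prod.fst ≤ c • η)
    -- μ_n(A × (X∖A)) → 0 for every Borel A ⊆ X
    (hsplit : ∀ A : Set X, MeasurableSet A →
      Tendsto (fun n => ((μ n) (A ×ˢ Aᶜ)).toReal) atTop (𝓝 0))
    -- V a neighborhood of the identity
    (V : Set G) (hV : V ∈ 𝓝 (1 : G)) :
    Tendsto (fun n => ((μ n) {p : X × X | (p.1 : G) * ((p.2 : G))⁻¹ ∈ V}).toReal)
      atTop (𝓝 1) := by
  -- symmetric neighborhood W with W * W⁻¹ ⊆ V
  obtain ⟨W₀, hW₀open, hW₀mem, hW₀⟩ := exists_open_nhds_one_mul_subset hV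
  set W : Set G := W₀ ∩ W₀⁻¹ with hWdef
  have hWopen : IsOpen W := hW₀open.inter hW₀open.inv
  have hWmem : (1 : G) ∈ W := ⟨hW₀mem, by simpa using hW₀mem⟩
  have hWV : ∀ a b : G, a ∈ W → b ∈ W → a * b⁻¹ ∈ V := fun a b ha hb =>
    hW₀ (Set.mul_mem_mul ha.1 hb.2)
  -- countable dense set, enumerated
  obtain ⟨D, hDc, hDd⟩ := TopologicalSpace.exists_countable_dense G
  obtain ⟨g, hg⟩ := hDc.exists_eq_range hDd.nonempty
  -- the sets A i
  set A : ℕ → Set X := fun i => {x : X | (x : G) * (g i)⁻¹ ∈ W} with hA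
  have hAmeas : ∀ i, MeasurableSet (A i) := fun i =>
    hWopen.measurableSet.preimage (measurable_subtype_coe.mul_const (g i)⁻¹)
  have hAcover : (⋃ i, A i) = univ := by
    ext x
    simp only [mem_iUnion, mem_univ, iff_true]
    have hSopen : IsOpen ((fun h : G => (x : G) * h⁻¹) ⁻¹' W) :=
      hWopen.preimage (continuous_const.mul continuous_inv)
    have hSne : ((fun h : G => (x : G) * h⁻¹) ⁻¹' W).Nonempty :=
      ⟨(x : G), by simpa using hWmem⟩
    obtain ⟨d, hdD, hdS⟩ := hDd.exists_mem_open hSopen hSne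
    obtain ⟨i, rfl⟩ := by rw [hg] at hdD; exact hdD
    exact ⟨i, hdS⟩
  set B : Set (X × X) := {p : X × X | (p.1 : G) * ((p.2 : G))⁻¹ ∈ V} with hB
  -- key inclusion
  have incl : ∀ N : ℕ, Bᶜ ⊆
      (⋃ i ∈ Finset.range (N + 1), A i ×ˢ (A i)ᶜ) ∪ ((Set.accumulate A N)ᶜ ×ˢ univ) := by
    intro N p hp
    by_cases h1 : p.1 ∈ Set.accumulate A N
    · obtain ⟨i, hiN, hpi⟩ := Set.mem_accumulate.1 h1
      refine Or.inl (Set.mem_biUnion (Finset.mem_range.2 (Nat.lt_succ_of_le hiN)) ?_)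
      refine ⟨hpi, fun h2 => hp ?_⟩
      have := hWV _ _ hpi h2
      simpa [hB, mul_assoc, mul_inv_rev] using this
    · exact Or.inr ⟨h1, mem_univ _⟩
  -- measure bound in ℝ≥0∞
  have main : ∀ N n : ℕ, (1 : ℝ≥0∞) ≤ μ n B +
      ((∑ i ∈ Finset.range (N + 1), μ n (A i ×ˢ (A i)ᶜ)) +
        (c : ℝ≥0∞) * η (Set.accumulate A N)ᶜ) := by
    intro N n
    have h1 : (1 : ℝ≥0∞) = μ n (B ∪ Bᶜ) := by
      rw [Set.union_compl_self, measure_univ]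
    have h2 : μ n (B ∪ Bᶜ) ≤ μ n B + μ n Bᶜ := measure_union_le _ _
    have h3 : μ n Bᶜ ≤ μ n (⋃ i ∈ Finset.range (N + 1), A i ×ˢ (A i)ᶜ) +
        μ n ((Set.accumulate A N)ᶜ ×ˢ univ) :=
      le_trans (measure_mono (incl N)) (measure_union_le _ _)
    have h4 : μ n (⋃ i ∈ Finset.range (N + 1), A i ×ˢ (A i)ᶜ) ≤
        ∑ i ∈ Finset.range (N + 1), μ n (A i ×ˢ (A i)ᶜ) :=
      measure_biUnion_finset_le _ _
    have h5 : μ n ((Set.accumulate A N)ᶜ ×ˢ univ) ≤ (c : ℝ≥0∞) * η (Set.accumulate A N)ᶜ := by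
      have hAccm : MeasurableSet (Set.accumulate A N)ᶜ :=
        (MeasurableSet.biUnion (Set.to_countable _) fun i _ => hAmeas i).compl
      rw [Set.prod_univ, ← Measure.map_apply measurable_fst hAccm]
      calc ((μ n).map Prod.fst) (Set.accumulate A N)ᶜ
          ≤ (c • η) (Set.accumulate A N)ᶜ := Measure.le_iff'.1 (hmarg n) _
        _ = (c : ℝ≥0∞) * η (Set.accumulate A N)ᶜ := by rw [Measure.smul_apply, ENNReal.smul_def, smul_eq_mul]
    calc (1 : ℝ≥0∞) = μ n (B ∪ Bᶜ) := h1
      _ ≤ μ n B + μ n Bᶜ := h2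
      _ ≤ μ n B + ((∑ i ∈ Finset.range (N + 1), μ n (A i ×ˢ (A i)ᶜ)) +
          (c : ℝ≥0∞) * η (Set.accumulate A N)ᶜ) := by
          gcongr
          exact h3.trans (by gcongr)
  -- real-valued version
  have mainR : ∀ N n : ℕ, (1 : ℝ) ≤ (μ n B).toReal +
      ((∑ i ∈ Finset.range (N + 1), (μ n (A i ×ˢ (A i)ᶜ)).toReal) +
        (c : ℝ) * (η (Set.accumulate A N)ᶜ).toReal) := by
    intro N n
    have := hμprob n
    have hfin : μ n B + ((∑ i ∈ Finset.range (N + 1), μ n (A i ×ˢ (A i)ᶜ)) +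
        (c : ℝ≥0∞) * η (Set.accumulate A N)ᶜ) ≠ ∞ := by
      refine ENNReal.add_ne_top.2 ⟨measure_ne_top _ _, ENNReal.add_ne_top.2 ⟨?_, ?_⟩⟩
      · exact (ENNReal.sum_lt_top.2 fun i _ => measure_lt_top _ _).ne
      · exact ENNReal.mul_ne_top ENNReal.coe_ne_top (measure_ne_top _ _)
    have := ENNReal.toReal_mono hfin (main N n)
    rw [ENNReal.toReal_add (measure_ne_top _ _), ENNReal.toReal_add,
        ENNReal.toReal_sum, ENNReal.toReal_mul, ENNReal.coe_toReal] at this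
    · simpa using this
    · exact fun i _ => measure_ne_top _ _
    · exact (ENNReal.sum_lt_top.2 fun i _ => measure_lt_top _ _).ne
    · exact ENNReal.mul_ne_top ENNReal.coe_ne_top (measure_ne_top _ _)
    · exact ENNReal.add_ne_top.1 hfin |>.2
  -- η(Accᶜ) → 0
  have hacc : Tendsto (fun N => (c : ℝ) * (η (Set.accumulate A N)ᶜ).toReal) atTop (𝓝 0) := by
    have h1 : Tendsto (fun N => η (Set.accumulate A N)) atTop (𝓝 (η (⋃ i, A i))) :=
      tendsto_measure_iUnion_accumulate
    rw [hAcover, measure_univ] at h1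
    have h2 : Tendsto (fun N => (η (Set.accumulate A N)).toReal) atTop (𝓝 1) := by
      have := (ENNReal.tendsto_toReal ENNReal.one_ne_top).comp h1
      simpa [Function.comp_def] using this
    have h3 : ∀ N, (η (Set.accumulate A N)ᶜ).toReal = 1 - (η (Set.accumulate A N)).toReal := by
      intro N
      have hAccm : MeasurableSet (Set.accumulate A N) :=
        MeasurableSet.biUnion (Set.to_countable _) fun i _ => hAmeas i
      rw [prob_compl_eq_one_sub hAccm, ENNReal.toReal_sub_of_le prob_le_one ENNReal.one_ne_top,
        ENNReal.toReal_one]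
    simp only [h3]
    have : Tendsto (fun N => (1 : ℝ) - (η (Set.accumulate A N)).toReal) atTop (𝓝 (1 - 1)) :=
      tendsto_const_nhds.sub h2
    simpa using (tendsto_const_nhds.mul this : Tendsto (fun N => (c:ℝ) * (1 - (η (Set.accumulate A N)).toReal)) atTop (𝓝 ((c:ℝ) * (1-1))))
  -- conclude
  rw [Metric.tendsto_atTop]
  intro ε hε
  obtain ⟨N, hN⟩ := Metric.tendsto_atTop.1 hacc (ε / 2) (by linarith)
  have hsum : Tendsto (fun n => ∑ i ∈ Finset.range (N + 1), (μ n (A i ×ˢ (A i)ᶜ)).toReal)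
      atTop (𝓝 0) := by
    have := tendsto_finset_sum (Finset.range (N + 1))
      (fun i _ => hsplit (A i) (hAmeas i))
    simpa using this
  obtain ⟨M, hM⟩ := Metric.tendsto_atTop.1 hsum (ε / 2) (by linarith)
  refine ⟨M, fun n hn => ?_⟩
  have := hμprob n
  have hle1 : (μ n B).toReal ≤ 1 := by
    have := prob_le_one (μ := μ n) (s := B)
    simpa using ENNReal.toReal_mono ENNReal.one_ne_top this
  have hNb : (c : ℝ) * (η (Set.accumulate A N)ᶜ).toReal < ε / 2 := by
    have := hN N le_rfl
    rw [Real.dist_eq] at this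
    have hnn : 0 ≤ (c : ℝ) * (η (Set.accumulate A N)ᶜ).toReal :=
      mul_nonneg c.2 ENNReal.toReal_nonneg
    calc (c : ℝ) * (η (Set.accumulate A N)ᶜ).toReal
        = |(c : ℝ) * (η (Set.accumulate A N)ᶜ).toReal - 0| := by rw [sub_zero, abs_of_nonneg hnn]
      _ < ε / 2 := this
  have hMb : ∑ i ∈ Finset.range (N + 1), (μ n (A i ×ˢ (A i)ᶜ)).toReal < ε / 2 := by
    have := hM n hn
    rw [Real.dist_eq] at this
    have hnn : 0 ≤ ∑ i ∈ Finset.range (N + 1), (μ n (A i ×ˢ (A i)ᶜ)).toReal :=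
      Finset.sum_nonneg fun i _ => ENNReal.toReal_nonneg
    calc ∑ i ∈ Finset.range (N + 1), (μ n (A i ×ˢ (A i)ᶜ)).toReal
        = |∑ i ∈ Finset.range (N + 1), (μ n (A i ×ˢ (A i)ᶜ)).toReal - 0| := by
          rw [sub_zero, abs_of_nonneg hnn]
      _ < ε / 2 := this
  have := mainR N n
  rw [Real.dist_eq, abs_of_nonpos (by linarith)]
  linarith
end

section
/- Let X be a measurable space, η a probability measure on X, c > 0, and (μ_n) a sequence of probability measures on X × X such that the first marginal of μ_n is dominated by c·η for all n, and μ_n(A × (X∖A)) → 0 for every measurable subset A ⊆ X. Then for every countable set I (with the discrete σ-algebra) and every measurable map φ : X → I, one has μ_n( {(x,y) ∈ X × X : φ(x) = φ(y)} ) → 1 as n → ∞. -/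
open MeasureTheory Filter Topology
open scoped NNReal ENNReal

theorem countable_level_sets_claim
    (X : Type*) [MeasurableSpace X]
    (η : Measure X) (hη : IsProbabilityMeasure η)
    (c : ℝ≥0) (hc : 0 < c)
    (μ : ℕ → Measure (X × X)) (hμprob : ∀ n, IsProbabilityMeasure (μ n))
    -- the first marginal of μ_n is dominated by c·η
    (hmarg : ∀ n, (μ n).map Prod.fst ≤ c • η)
    -- μ_n(A × (X∖A)) → 0 for every measurable A ⊆ X
    (hsplit : ∀ A : Set X, MeasurableSet A →
      Tendsto (fun n => ((μ n) (A ×ˢ Aᶜ)).toReal) atTop (𝓝 0))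
    -- a countable set I (with the discrete σ-algebra) and a measurable map φ : X → I,
    -- i.e. all level sets of φ are measurable
    (I : Type*) [Countable I]
    (φ : X → I) (hφ : ∀ i : I, MeasurableSet (φ ⁻¹' {i})) :
    Tendsto (fun n => ((μ n) {p : X × X | φ p.1 = φ p.2}).toReal) atTop (𝓝 1) := by
  set A : I → Set X := fun i => φ ⁻¹' {i} with hA_def
  have hA : ∀ i, MeasurableSet (A i) := hφ
  set S : Set (X × X) := {p : X × X | φ p.1 = φ p.2} with hS_def
  have hS : MeasurableSet S := by
    have : S = ⋃ i, (A i) ×ˢ (A i) := by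
      ext p
      simp only [Set.mem_setOf_eq, Set.mem_iUnion, Set.mem_prod, hA_def, Set.mem_preimage,
        Set.mem_singleton_iff, hS_def]
      constructor
      · intro h; exact ⟨φ p.1, rfl, h.symm⟩
      · rintro ⟨i, h1, h2⟩; rw [h1, h2]
    rw [this]
    exact MeasurableSet.iUnion fun i => (hA i).prod (hA i)
  have hScompl : Sᶜ = ⋃ i, (A i) ×ˢ (A i)ᶜ := by
    ext p
    simp only [Set.mem_compl_iff, Set.mem_setOf_eq, Set.mem_iUnion, Set.mem_prod, hA_def,
      Set.mem_preimage, Set.mem_singleton_iff, hS_def]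
    constructor
    · intro h; exact ⟨φ p.1, rfl, fun h' => h h'.symm⟩
    · rintro ⟨i, h1, h2⟩ h; exact h2 (h1 ▸ h.symm)
  have hdisj : Pairwise (Function.onFun Disjoint fun i => (A i) ×ˢ (A i)ᶜ) := by
    intro i j hij
    refine Set.disjoint_left.2 ?_
    rintro p ⟨h1, _⟩ ⟨h3, _⟩
    exact hij (h1.symm.trans h3)
  have hmeas : ∀ i, MeasurableSet ((A i) ×ˢ (A i)ᶜ) := fun i => (hA i).prod (hA i).compl
  -- bound on each term
  have hbound : ∀ n i, (μ n) ((A i) ×ˢ (A i)ᶜ) ≤ (c : ℝ≥0∞) * η (A i) := by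
    intro n i
    have h1 : (μ n) ((A i) ×ˢ (A i)ᶜ) ≤ (μ n) (Prod.fst ⁻¹' (A i)) := by
      apply measure_mono
      rintro p ⟨h1, _⟩; exact h1
    have h2 : (μ n) (Prod.fst ⁻¹' (A i)) = ((μ n).map Prod.fst) (A i) := by
      rw [Measure.map_apply measurable_fst (hA i)]
    have h3 : ((μ n).map Prod.fst) (A i) ≤ (c • η) (A i) := hmarg n (A i)
    calc (μ n) ((A i) ×ˢ (A i)ᶜ) ≤ ((μ n).map Prod.fst) (A i) := h2 ▸ h1
      _ ≤ (c • η) (A i) := h3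
      _ = (c : ℝ≥0∞) * η (A i) := by rw [Measure.smul_apply, ENNReal.smul_def, smul_eq_mul]
  have hfin : ∀ n i, (μ n) ((A i) ×ˢ (A i)ᶜ) ≠ ∞ := fun n i => measure_ne_top _ _
  -- summable bound
  have hηsum : ∑' i, η (A i) ≤ 1 := by
    calc ∑' i, η (A i) = η (⋃ i, A i) := by
          refine (measure_iUnion ?_ hA).symm
          intro i j hij
          refine Set.disjoint_left.2 fun x h1 h2 => hij ?_
          simp only [hA_def, Set.mem_preimage, Set.mem_singleton_iff] at h1 h2
          rw [← h1, ← h2]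
      _ ≤ η Set.univ := measure_mono (Set.subset_univ _)
      _ = 1 := measure_univ
  have hgsum : Summable (fun i => (c : ℝ) * (η (A i)).toReal) := by
    refine Summable.mul_left _ ?_
    apply ENNReal.summable_toReal
    exact ne_top_of_le_ne_top (by norm_num) hηsum
  -- each term tends to 0
  have hterm : ∀ i, Tendsto (fun n => ((μ n) ((A i) ×ˢ (A i)ᶜ)).toReal) atTop (𝓝 0) :=
    fun i => hsplit (A i) (hA i)
  have htsum : Tendsto (fun n => ∑' i, ((μ n) ((A i) ×ˢ (A i)ᶜ)).toReal) atTop (𝓝 0) := by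
    have := tendsto_tsum_of_dominated_convergence (f := fun n i => ((μ n) ((A i) ×ˢ (A i)ᶜ)).toReal)
      (g := fun _ => (0 : ℝ)) (bound := fun i => (c : ℝ) * (η (A i)).toReal) hgsum hterm ?_
    · simpa using this
    · refine Filter.Eventually.of_forall fun n i => ?_
      rw [Real.norm_of_nonneg ENNReal.toReal_nonneg]
      have := hbound n i
      have hle : ((μ n) ((A i) ×ˢ (A i)ᶜ)).toReal ≤ ((c : ℝ≥0∞) * η (A i)).toReal :=
        ENNReal.toReal_mono (by finiteness) this
      simpa [ENNReal.toReal_mul] using hle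
  have hcompl : ∀ n, ((μ n) Sᶜ).toReal = ∑' i, ((μ n) ((A i) ×ˢ (A i)ᶜ)).toReal := by
    intro n
    rw [hScompl, measure_iUnion hdisj hmeas, ENNReal.tsum_toReal_eq (fun i => hfin n i)]
  have hmain : Tendsto (fun n => ((μ n) Sᶜ).toReal) atTop (𝓝 0) := by
    simp only [hcompl]; exact htsum
  have heq : ∀ n, ((μ n) S).toReal = 1 - ((μ n) Sᶜ).toReal := by
    intro n
    have := hμprob n
    have h := measure_compl hS (measure_ne_top (μ n) S)
    rw [h, measure_univ,
      ENNReal.toReal_sub_of_le (prob_le_one) (by norm_num), ENNReal.toReal_one,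
      sub_sub_cancel]
  have : Tendsto (fun n => 1 - ((μ n) Sᶜ).toReal) atTop (𝓝 (1 - 0)) :=
    tendsto_const_nhds.sub hmain
  simp only [sub_zero] at this
  simpa only [heq] using this
end

section
/- Let X be a standard Borel space, η a Borel probability measure on X, and Δ = {(x,x) : x ∈ X} the diagonal in X × X. Let (ν_n) be a sequence of Borel probability measures on X × X such that the first marginal of each ν_n equals η and ∫ f(x) g(y) dν_n(x,y) → ∫ f g dη for all bounded Borel functions f, g : X → ℝ. Suppose c > 0 is such that c_n := 1 − ν_n(Δ) ≥ c for all n, and define μ_n(A) = c_n⁻¹ · ν_n(A ∖ Δ) for Borel sets A ⊆ X × X. Then each μ_n is a Borel probability measure on X × X satisfying: μ_n(Δ) = 0; the first marginal of μ_n is dominated by c⁻¹·η; and μ_n(A × (X∖A)) → 0 for every Borel subset A ⊆ X. -/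
open MeasureTheory Filter Topology
open scoped NNReal ENNReal

theorem offdiagonal_normalization
    (X : Type*) [MeasurableSpace X] [StandardBorelSpace X]
    (η : Measure X) (hη : IsProbabilityMeasure η)
    (ν : ℕ → Measure (X × X)) (hνprob : ∀ n, IsProbabilityMeasure (ν n))
    -- the first marginal of each ν_n equals η
    (hmarg : ∀ n, (ν n).map Prod.fst = η)
    -- ∫ f(x) g(y) dν_n(x,y) → ∫ f g dη for all bounded Borel f, g
    (hconv : ∀ f g : X → ℝ, Measurable f → Measurable g →
      (∃ C, ∀ z, |f z| ≤ C) → (∃ C, ∀ z, |g z| ≤ C) →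
      Tendsto (fun n => ∫ p, f p.1 * g p.2 ∂(ν n)) atTop (𝓝 (∫ z, f z * g z ∂η)))
    -- c > 0 with c_n := 1 − ν_n(Δ) ≥ c for all n
    (c : ℝ) (hc : 0 < c)
    (hcn : ∀ n, c ≤ 1 - ((ν n) (Set.diagonal X)).toReal)
    -- μ_n(A) = c_n⁻¹ · ν_n(A ∖ Δ)
    (μ : ℕ → Measure (X × X))
    (hμdef : ∀ n, μ n = (ENNReal.ofReal (1 - ((ν n) (Set.diagonal X)).toReal))⁻¹ •
      ((ν n).restrict (Set.diagonal X)ᶜ)) :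
    (∀ n, IsProbabilityMeasure (μ n)) ∧
    (∀ n, μ n (Set.diagonal X) = 0) ∧
    (∀ n, (μ n).map Prod.fst ≤ (ENNReal.ofReal c)⁻¹ • η) ∧
    (∀ A : Set X, MeasurableSet A →
      Tendsto (fun n => ((μ n) (A ×ˢ Aᶜ)).toReal) atTop (𝓝 0)) := by
  letI := upgradeStandardBorel X
  have hΔ : MeasurableSet (Set.diagonal X) := isClosed_diagonal.measurableSet
  set d : ℕ → ℝ := fun n => 1 - ((ν n) (Set.diagonal X)).toReal with hd
  have hdc : ∀ n, c ≤ d n := hcn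
  have hdpos : ∀ n, 0 < d n := fun n => lt_of_lt_of_le hc (hdc n)
  have hνfin : ∀ n (s : Set (X × X)), (ν n) s ≠ ∞ := fun n s => by
    haveI := hνprob n; exact measure_ne_top _ _
  have hcompl : ∀ n, (ν n) (Set.diagonal X)ᶜ = ENNReal.ofReal (d n) := by
    intro n
    haveI := hνprob n
    have h1 : (ν n) (Set.diagonal X)ᶜ = 1 - (ν n) (Set.diagonal X) := by
      rw [measure_compl hΔ (hνfin n _), measure_univ]
    rw [h1, hd]
    rw [← ENNReal.ofReal_toReal (hνfin n (Set.diagonal X)),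
      ← ENNReal.ofReal_one, ← ENNReal.ofReal_sub _ ENNReal.toReal_nonneg]
  have hofd_ne0 : ∀ n, ENNReal.ofReal (d n) ≠ 0 := fun n =>
    (ENNReal.ofReal_pos.mpr (hdpos n)).ne'
  have hofd_netop : ∀ n, ENNReal.ofReal (d n) ≠ ∞ := fun n => ENNReal.ofReal_ne_top
  refine ⟨?_, ?_, ?_, ?_⟩
  · intro n
    constructor
    rw [hμdef n]
    simp only [Measure.smul_apply, smul_eq_mul, Measure.restrict_apply MeasurableSet.univ,
      Set.univ_inter, hcompl n]
    rw [ENNReal.inv_mul_cancel (hofd_ne0 n) (hofd_netop n)]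
  · intro n
    rw [hμdef n]
    simp only [Measure.smul_apply, smul_eq_mul, Measure.restrict_apply hΔ]
    simp
  · intro n
    rw [hμdef n]
    rw [Measure.map_smul]
    have h2 : ((ν n).restrict (Set.diagonal X)ᶜ).map Prod.fst ≤ η := by
      rw [← hmarg n]
      exact Measure.map_mono Measure.restrict_le_self measurable_fst
    intro s
    simp only [Measure.smul_apply, smul_eq_mul]
    exact mul_le_mul' (ENNReal.inv_le_inv.mpr (ENNReal.ofReal_le_ofReal (hdc n))) (h2 s)
  · intro A hA
    have hmeasprod : MeasurableSet (A ×ˢ Aᶜ) := hA.prod hA.compl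
    have hkey : Tendsto (fun n => ((ν n) (A ×ˢ Aᶜ)).toReal) atTop (𝓝 0) := by
      have hT := hconv (A.indicator 1) (Aᶜ.indicator 1)
        (measurable_one.indicator hA) (measurable_one.indicator hA.compl)
        ⟨1, fun z => by
          by_cases h : z ∈ A <;> simp [Set.indicator_apply, h]⟩
        ⟨1, fun z => by
          by_cases h : z ∈ Aᶜ <;> simp [Set.indicator_apply, h]⟩
      have heq : ∀ (m : Measure (X × X)), (∀ s : Set (X × X), m s ≠ ∞) →
          (∫ p : X × X, A.indicator (1 : X → ℝ) p.1 * Aᶜ.indicator (1 : X → ℝ) p.2 ∂m)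
            = (m (A ×ˢ Aᶜ)).toReal := by
        intro m hm
        have hpt : ∀ p : X × X, A.indicator (1 : X → ℝ) p.1 * Aᶜ.indicator (1 : X → ℝ) p.2
            = (A ×ˢ Aᶜ).indicator (1 : X × X → ℝ) p := by
          intro p
          by_cases h1 : p.1 ∈ A <;> by_cases h2 : p.2 ∈ Aᶜ <;>
            simp [Set.indicator_apply, h1, h2, Set.mem_prod]
        simp_rw [hpt]
        exact integral_indicator_one hmeasprod
      have hzero : (∫ z : X, A.indicator (1 : X → ℝ) z * Aᶜ.indicator (1 : X → ℝ) z ∂η)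
          = 0 := by
        have hpt : ∀ z : X, A.indicator (1 : X → ℝ) z * Aᶜ.indicator (1 : X → ℝ) z = 0 := by
          intro z
          by_cases h : z ∈ A <;> simp [Set.indicator_apply, h]
        simp only [hpt, integral_zero]
      rw [hzero] at hT
      have hrw : (fun n => ∫ p : X × X,
          A.indicator (1 : X → ℝ) p.1 * Aᶜ.indicator (1 : X → ℝ) p.2 ∂(ν n))
          = fun n => ((ν n) (A ×ˢ Aᶜ)).toReal := by
        funext n
        exact heq (ν n) (hνfin n)
      rwa [hrw] at hT
    have hμval : ∀ n, ((μ n) (A ×ˢ Aᶜ)).toReal ≤ c⁻¹ * ((ν n) (A ×ˢ Aᶜ)).toReal := by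
      intro n
      rw [hμdef n]
      simp only [Measure.smul_apply, smul_eq_mul, Measure.restrict_apply hmeasprod]
      rw [ENNReal.toReal_mul]
      have h1 : ((ENNReal.ofReal (d n))⁻¹).toReal ≤ c⁻¹ := by
        rw [ENNReal.toReal_inv, ENNReal.toReal_ofReal (le_of_lt (hdpos n))]
        exact inv_anti₀ hc (hdc n)
      have h2 : ((ν n) ((A ×ˢ Aᶜ) ∩ (Set.diagonal X)ᶜ)).toReal
          ≤ ((ν n) (A ×ˢ Aᶜ)).toReal :=
        ENNReal.toReal_mono (hνfin n _) (measure_mono Set.inter_subset_left)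
      exact mul_le_mul h1 h2 ENNReal.toReal_nonneg (by positivity)
    have hnn : ∀ n, 0 ≤ ((μ n) (A ×ˢ Aᶜ)).toReal := fun n => ENNReal.toReal_nonneg
    have hub : Tendsto (fun n => c⁻¹ * ((ν n) (A ×ˢ Aᶜ)).toReal) atTop (𝓝 0) := by
      simpa using hkey.const_mul c⁻¹
    exact squeeze_zero hnn hμval hub
end

section
/- Let Z be a Polish space, T : Z → Z a Borel map, and ζ_n, ζ Borel probability measures on Z such that ζ_n → ζ weakly and ‖T_*ζ_n − ζ_n‖ → 0, where ‖·‖ is the total variation norm. Assume that for every ε > 0 there exists a closed set Z₀ ⊆ Z such that the restriction of T to Z₀ is continuous, ζ(Z ∖ Z₀) ≤ ε, and ζ_n(Z ∖ Z₀) ≤ ε for all n. Then T_*ζ = ζ. -/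
open MeasureTheory Filter Topology BoundedContinuousFunction
open scoped ENNReal

/-- The total variation distance `‖μ - ν‖` between two (finite) Borel measures:
for probability measures `μ, ν` this is exactly the total variation norm of the signed
measure `μ - ν`, namely `2 · sup_A |μ(A) - ν(A)|` over measurable sets `A`. -/
noncomputable def tvDist {Z : Type*} [MeasurableSpace Z] (μ ν : Measure Z) : ℝ :=
  2 * ⨆ A : {s : Set Z // MeasurableSet s}, |(μ A.1).toReal - (ν A.1).toReal|

lemma abs_add_five_things (a b c d e : ℝ) :
    |a + b + c + d + e| ≤ |a| + |b| + |c| + |d| + |e| := by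
  calc |a + b + c + d + e| ≤ |a + b + c + d| + |e| := abs_add_le _ _
    _ ≤ (|a + b + c| + |d|) + |e| := by gcongr; exact abs_add_le _ _
    _ ≤ ((|a + b| + |c|) + |d|) + |e| := by gcongr; exact abs_add_le _ _
    _ ≤ (((|a| + |b|) + |c|) + |d|) + |e| := by gcongr; exact abs_add_le _ _

section Aux

variable {Z : Type*} [MeasurableSpace Z]

lemma tv_bddAbove (μ ν : Measure Z) [IsProbabilityMeasure μ] [IsProbabilityMeasure ν] :
    BddAbove (Set.range fun A : {s : Set Z // MeasurableSet s} =>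
      |(μ A.1).toReal - (ν A.1).toReal|) := by
  refine ⟨2, ?_⟩
  rintro _ ⟨B, rfl⟩
  have h1 : (μ B.1).toReal ≤ 1 := by
    simpa using ENNReal.toReal_mono ENNReal.one_ne_top (prob_le_one (μ := μ))
  have h2 : (ν B.1).toReal ≤ 1 := by
    simpa using ENNReal.toReal_mono ENNReal.one_ne_top (prob_le_one (μ := ν))
  have := abs_sub ((μ B.1).toReal) ((ν B.1).toReal)
  calc |(μ B.1).toReal - (ν B.1).toReal| ≤ |(μ B.1).toReal| + |(ν B.1).toReal| :=
        abs_sub _ _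
    _ ≤ 1 + 1 := by
        gcongr
        · rwa [abs_of_nonneg ENNReal.toReal_nonneg]
        · rwa [abs_of_nonneg ENNReal.toReal_nonneg]
    _ = 2 := by norm_num

lemma abs_measure_sub_le_tv (μ ν : Measure Z) [IsProbabilityMeasure μ] [IsProbabilityMeasure ν]
    {A : Set Z} (hA : MeasurableSet A) :
    |(μ A).toReal - (ν A).toReal|
      ≤ ⨆ B : {s : Set Z // MeasurableSet s}, |(μ B.1).toReal - (ν B.1).toReal| :=
  le_ciSup (tv_bddAbove μ ν) (⟨A, hA⟩ : {s : Set Z // MeasurableSet s})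

variable [TopologicalSpace Z] [OpensMeasurableSpace Z]

/-- Key total-variation bound: `|∫ f dμ - ∫ f dν| ≤ ‖f‖ · tvDist μ ν`. -/
lemma abs_integral_sub_le_tvDist (μ ν : Measure Z) [IsProbabilityMeasure μ]
    [IsProbabilityMeasure ν] (f : Z →ᵇ ℝ) :
    |∫ z, f z ∂μ - ∫ z, f z ∂ν| ≤ ‖f‖ * tvDist μ ν := by
  set ξ : Measure Z := μ + ν with hξ
  have hμξ : μ ≪ ξ := Measure.absolutelyContinuous_of_le (Measure.le_add_right le_rfl)
  have hνξ : ν ≪ ξ := Measure.absolutelyContinuous_of_le (Measure.le_add_left le_rfl)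
  set p : Z → ℝ := fun x => (μ.rnDeriv ξ x).toReal with hp
  set q : Z → ℝ := fun x => (ν.rnDeriv ξ x).toReal with hq
  have hpint : Integrable p ξ := Measure.integrable_toReal_rnDeriv
  have hqint : Integrable q ξ := Measure.integrable_toReal_rnDeriv
  have habs_int : Integrable (fun x => |p x - q x|) ξ := (hpint.sub hqint).abs
  have haeμ : ∀ᵐ x ∂ξ, μ.rnDeriv ξ x ≠ ∞ :=
    (Measure.rnDeriv_lt_top μ ξ).mono fun x h => h.ne
  have haeν : ∀ᵐ x ∂ξ, ν.rnDeriv ξ x ≠ ∞ :=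
    (Measure.rnDeriv_lt_top ν ξ).mono fun x h => h.ne
  set A : Set Z := {x | ν.rnDeriv ξ x ≤ μ.rnDeriv ξ x} with hAdef
  have hAmeas : MeasurableSet A :=
    measurableSet_le (Measure.measurable_rnDeriv ν ξ) (Measure.measurable_rnDeriv μ ξ)
  set S : ℝ := ⨆ B : {s : Set Z // MeasurableSet s}, |(μ B.1).toReal - (ν B.1).toReal| with hS
  -- compute the integral of |p - q| over A
  have honA : ∫ x in A, |p x - q x| ∂ξ = (μ A).toReal - (ν A).toReal := by
    have h1 : ∫ x in A, |p x - q x| ∂ξ = ∫ x in A, (p x - q x) ∂ξ := by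
      refine setIntegral_congr_ae hAmeas ?_
      filter_upwards [haeμ] with x hx hxA
      have hle : q x ≤ p x := ENNReal.toReal_mono hx hxA
      exact abs_of_nonneg (sub_nonneg.mpr hle)
    rw [h1, integral_sub hpint.integrableOn hqint.integrableOn,
      Measure.setIntegral_toReal_rnDeriv' hμξ hAmeas,
      Measure.setIntegral_toReal_rnDeriv' hνξ hAmeas, measureReal_def, measureReal_def]
  have honAc : ∫ x in Aᶜ, |p x - q x| ∂ξ = (ν Aᶜ).toReal - (μ Aᶜ).toReal := by
    have h1 : ∫ x in Aᶜ, |p x - q x| ∂ξ = ∫ x in Aᶜ, (q x - p x) ∂ξ := by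
      refine setIntegral_congr_ae hAmeas.compl ?_
      filter_upwards [haeν] with x hx hxA
      have hlt : μ.rnDeriv ξ x ≤ ν.rnDeriv ξ x := le_of_lt (not_le.mp hxA)
      have hle : p x ≤ q x := ENNReal.toReal_mono hx hlt
      rw [abs_sub_comm]
      exact abs_of_nonneg (sub_nonneg.mpr hle)
    rw [h1, integral_sub hqint.integrableOn hpint.integrableOn,
      Measure.setIntegral_toReal_rnDeriv' hνξ hAmeas.compl,
      Measure.setIntegral_toReal_rnDeriv' hμξ hAmeas.compl, measureReal_def, measureReal_def]
  have hkey : ∫ x, |p x - q x| ∂ξ ≤ tvDist μ ν := by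
    have hsplit : ∫ x in A, |p x - q x| ∂ξ + ∫ x in Aᶜ, |p x - q x| ∂ξ
        = ∫ x, |p x - q x| ∂ξ := integral_add_compl hAmeas habs_int
    have hA_le : (μ A).toReal - (ν A).toReal ≤ S :=
      (le_abs_self _).trans (abs_measure_sub_le_tv μ ν hAmeas)
    have hAc_le : (ν Aᶜ).toReal - (μ Aᶜ).toReal ≤ S := by
      refine le_trans ?_ (abs_measure_sub_le_tv μ ν hAmeas.compl)
      rw [abs_sub_comm]
      exact le_abs_self _
    rw [← hsplit, honA, honAc]
    calc (μ A).toReal - (ν A).toReal + ((ν Aᶜ).toReal - (μ Aᶜ).toReal) ≤ S + S := by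
          exact add_le_add hA_le hAc_le
      _ = 2 * S := by ring
      _ = tvDist μ ν := rfl
  -- rewrite the integrals using Radon–Nikodym derivatives
  have h1 : ∫ x, p x • f x ∂ξ = ∫ z, f z ∂μ := integral_rnDeriv_smul hμξ
  have h2 : ∫ x, q x • f x ∂ξ = ∫ z, f z ∂ν := integral_rnDeriv_smul hνξ
  have hfm : AEStronglyMeasurable (⇑f) ξ := f.continuous.measurable.aestronglyMeasurable
  have hfb : ∃ C, ∀ x, ‖f x‖ ≤ C := ⟨‖f‖, fun x => f.norm_coe_le_norm x⟩
  have hint1 : Integrable (fun x => p x • f x) ξ := by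
    have := hpint.bdd_mul hfm (ae_of_all _ hfb.choose_spec)
    refine this.congr (Eventually.of_forall fun x => ?_)
    simp [mul_comm, smul_eq_mul]
  have hint2 : Integrable (fun x => q x • f x) ξ := by
    have := hqint.bdd_mul hfm (ae_of_all _ hfb.choose_spec)
    refine this.congr (Eventually.of_forall fun x => ?_)
    simp [mul_comm, smul_eq_mul]
  calc |∫ z, f z ∂μ - ∫ z, f z ∂ν|
      = |∫ x, (p x • f x - q x • f x) ∂ξ| := by
        rw [integral_sub hint1 hint2, h1, h2]
    _ ≤ ∫ x, |p x • f x - q x • f x| ∂ξ := by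
        simpa [Real.norm_eq_abs] using
          norm_integral_le_integral_norm (μ := ξ) (fun x => p x • f x - q x • f x)
    _ ≤ ∫ x, |p x - q x| * ‖f‖ ∂ξ := by
        refine integral_mono (hint1.sub hint2).abs (habs_int.mul_const _) fun x => ?_
        have : p x • f x - q x • f x = (p x - q x) * f x := by
          simp [smul_eq_mul]; ring
        rw [this, abs_mul]
        exact mul_le_mul_of_nonneg_left (f.norm_coe_le_norm x) (abs_nonneg _)
    _ = (∫ x, |p x - q x| ∂ξ) * ‖f‖ := integral_mul_const _ _
    _ ≤ tvDist μ ν * ‖f‖ := mul_le_mul_of_nonneg_right hkey (norm_nonneg f)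
    _ = ‖f‖ * tvDist μ ν := mul_comm _ _

end Aux

theorem weak_limit_invariant_lusin
    -- Z a Polish space with its Borel σ-algebra
    (Z : Type*) [TopologicalSpace Z] [PolishSpace Z] [MeasurableSpace Z] [BorelSpace Z]
    -- T a Borel map
    (T : Z → Z) (hT : Measurable T)
    (ζseq : ℕ → Measure Z) (hζseq : ∀ n, IsProbabilityMeasure (ζseq n))
    (ζ : Measure Z) (hζ : IsProbabilityMeasure ζ)
    -- ζ_n → ζ weakly
    (hweak : ∀ f : Z →ᵇ ℝ,
      Tendsto (fun n => ∫ z, f z ∂(ζseq n)) atTop (𝓝 (∫ z, f z ∂ζ)))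
    -- ‖T_*ζ_n − ζ_n‖ → 0 in total variation
    (htv : Tendsto (fun n => tvDist (Measure.map T (ζseq n)) (ζseq n)) atTop (𝓝 0))
    -- a Lusin-type hypothesis: T is continuous on closed sets of uniformly large measure
    (hlusin : ∀ ε : ℝ, 0 < ε → ∃ Z₀ : Set Z, IsClosed Z₀ ∧ ContinuousOn T Z₀ ∧
      (ζ Z₀ᶜ).toReal ≤ ε ∧ ∀ n, (ζseq n Z₀ᶜ).toReal ≤ ε) :
    Measure.map T ζ = ζ := by
  letI : TopologicalSpace.UpgradedIsCompletelyMetrizableSpace Z := TopologicalSpace.upgradeIsCompletelyMetrizable Z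
  have hmapζ : IsProbabilityMeasure (Measure.map T ζ) :=
    Measure.isProbabilityMeasure_map hT.aemeasurable
  have hmapn : ∀ n, IsProbabilityMeasure (Measure.map T (ζseq n)) := fun n =>
    @Measure.isProbabilityMeasure_map _ _ _ _ _ (hζseq n) _ hT.aemeasurable
  -- it suffices to show that the real integrals of bounded continuous functions agree
  suffices hkey : ∀ f : Z →ᵇ ℝ, ∫ z, f z ∂(Measure.map T ζ) = ∫ z, f z ∂ζ by
    apply ext_of_forall_lintegral_eq_of_IsFiniteMeasure
    intro f
    have hfin1 : ∫⁻ x, f x ∂(Measure.map T ζ) < ∞ := lintegral_lt_top_of_nnreal _ f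
    have hfin2 : ∫⁻ x, f x ∂ζ < ∞ := lintegral_lt_top_of_nnreal _ f
    have hreal : (∫⁻ x, f x ∂(Measure.map T ζ)).toReal = (∫⁻ x, f x ∂ζ).toReal := by
      rw [toReal_lintegral_coe_eq_integral, toReal_lintegral_coe_eq_integral]
      exact hkey (f.comp (↑) isometry_subtype_coe.lipschitz)
    exact (ENNReal.toReal_eq_toReal_iff' hfin1.ne hfin2.ne).mp hreal
  intro f
  -- integrability of f ∘ T with respect to any (probability) measure
  have hfT_meas : Measurable fun z => f (T z) := f.continuous.measurable.comp hT
  have hfT_int : ∀ (μ : Measure Z), IsProbabilityMeasure μ →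
      Integrable (fun z => f (T z)) μ := by
    intro μ hμ
    exact ⟨hfT_meas.aestronglyMeasurable,
      HasFiniteIntegral.of_bounded (C := ‖f‖) (ae_of_all _ fun z => f.norm_coe_le_norm (T z))⟩
  rw [integral_map hT.aemeasurable f.continuous.measurable.aestronglyMeasurable]
  -- we show the difference is smaller than every positive ε
  set D : ℝ := ∫ z, f (T z) ∂ζ - ∫ z, f z ∂ζ with hD
  have habs : ∀ ε : ℝ, 0 < ε → |D| ≤ (4 * ‖f‖ + 1) * ε := by
    intro ε hε
    obtain ⟨Z₀, hZ₀closed, hTcont, hζZ₀, hζnZ₀⟩ := hlusin ε hε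
    have hZ₀meas : MeasurableSet Z₀ := hZ₀closed.measurableSet
    -- Tietze extension of f ∘ T from Z₀
    have hFc : Continuous fun x : Z₀ => f (T x) :=
      f.continuous.comp (hTcont.restrict)
    set F : Z₀ →ᵇ ℝ := BoundedContinuousFunction.ofNormedAddCommGroup
      (fun x : Z₀ => f (T x)) hFc ‖f‖ (fun x => f.norm_coe_le_norm _) with hFdef
    obtain ⟨g, hgnorm, hgres⟩ := exists_norm_eq_restrict_eq_of_closed F hZ₀closed
    have hgle : ‖g‖ ≤ ‖f‖ := by
      rw [hgnorm]
      exact norm_ofNormedAddCommGroup_le _ (norm_nonneg f) _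
    have hgeq : ∀ x ∈ Z₀, g x = f (T x) := by
      intro x hx
      have := congrFun (congrArg (fun h : Z₀ →ᵇ ℝ => (h : Z₀ → ℝ)) hgres) ⟨x, hx⟩
      simpa [hFdef] using this
    -- the main approximation estimate for a fixed probability measure
    have happrox : ∀ (μ : Measure Z), IsProbabilityMeasure μ →
        |∫ z, f (T z) ∂μ - ∫ z, g z ∂μ| ≤ 2 * ‖f‖ * (μ Z₀ᶜ).toReal := by
      intro μ hμ
      have hdiff_int : Integrable (fun z => f (T z) - g z) μ :=
        (hfT_int μ hμ).sub (g.integrable μ)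
      have hzero : ∫ z in Z₀, (f (T z) - g z) ∂μ = 0 := by
        refine setIntegral_eq_zero_of_forall_eq_zero fun x hx => ?_
        rw [hgeq x hx]; ring
      have hsplit : ∫ z in Z₀, (f (T z) - g z) ∂μ + ∫ z in Z₀ᶜ, (f (T z) - g z) ∂μ
          = ∫ z, (f (T z) - g z) ∂μ := integral_add_compl hZ₀meas hdiff_int
      have hbound : ‖∫ z in Z₀ᶜ, (f (T z) - g z) ∂μ‖ ≤ (2 * ‖f‖) * (μ Z₀ᶜ).toReal := by
        refine norm_setIntegral_le_of_norm_le_const (measure_lt_top μ _)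
          fun x _ => ?_
        calc ‖f (T x) - g x‖ ≤ ‖f (T x)‖ + ‖g x‖ := norm_sub_le _ _
          _ ≤ ‖f‖ + ‖g‖ := add_le_add (f.norm_coe_le_norm _) (g.norm_coe_le_norm _)
          _ ≤ ‖f‖ + ‖f‖ := add_le_add le_rfl hgle
          _ = 2 * ‖f‖ := by ring
      have heq : ∫ z, f (T z) ∂μ - ∫ z, g z ∂μ = ∫ z in Z₀ᶜ, (f (T z) - g z) ∂μ := by
        rw [← integral_sub (hfT_int μ hμ) (g.integrable μ), ← hsplit, hzero, zero_add]
      rw [heq]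
      calc |∫ z in Z₀ᶜ, (f (T z) - g z) ∂μ| ≤ (2 * ‖f‖) * (μ Z₀ᶜ).toReal := hbound
        _ = 2 * ‖f‖ * (μ Z₀ᶜ).toReal := by ring
    -- pieces of the chain of estimates
    have hterm1 : |∫ z, f (T z) ∂ζ - ∫ z, g z ∂ζ| ≤ 2 * ‖f‖ * ε := by
      refine le_trans (happrox ζ hζ) ?_
      have h2f : (0:ℝ) ≤ 2 * ‖f‖ := by positivity
      exact mul_le_mul_of_nonneg_left hζZ₀ h2f
    have hterm3 : ∀ n, |∫ z, f (T z) ∂(ζseq n) - ∫ z, g z ∂(ζseq n)| ≤ 2 * ‖f‖ * ε := by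
      intro n
      refine le_trans (happrox (ζseq n) (hζseq n)) ?_
      have h2f : (0:ℝ) ≤ 2 * ‖f‖ := by positivity
      exact mul_le_mul_of_nonneg_left (hζnZ₀ n) h2f
    have hterm4 : ∀ n, |∫ z, f (T z) ∂(ζseq n) - ∫ z, f z ∂(ζseq n)|
        ≤ ‖f‖ * tvDist (Measure.map T (ζseq n)) (ζseq n) := by
      intro n
      have : ∫ z, f (T z) ∂(ζseq n) = ∫ z, f z ∂(Measure.map T (ζseq n)) :=
        (integral_map hT.aemeasurable f.continuous.measurable.aestronglyMeasurable).symm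
      rw [this]
      haveI := hζseq n
      haveI := hmapn n
      exact abs_integral_sub_le_tvDist _ _ f
    -- the n-dependent upper bound on |D|
    have hDn : ∀ n, |D| ≤ 2 * ‖f‖ * ε + |∫ z, g z ∂ζ - ∫ z, g z ∂(ζseq n)|
        + 2 * ‖f‖ * ε + ‖f‖ * tvDist (Measure.map T (ζseq n)) (ζseq n)
        + |∫ z, f z ∂(ζseq n) - ∫ z, f z ∂ζ| := by
      intro n
      have hchain : D = (∫ z, f (T z) ∂ζ - ∫ z, g z ∂ζ)
          + (∫ z, g z ∂ζ - ∫ z, g z ∂(ζseq n))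
          + (∫ z, g z ∂(ζseq n) - ∫ z, f (T z) ∂(ζseq n))
          + (∫ z, f (T z) ∂(ζseq n) - ∫ z, f z ∂(ζseq n))
          + (∫ z, f z ∂(ζseq n) - ∫ z, f z ∂ζ) := by rw [hD]; ring
      calc |D| ≤ |∫ z, f (T z) ∂ζ - ∫ z, g z ∂ζ|
            + |∫ z, g z ∂ζ - ∫ z, g z ∂(ζseq n)|
            + |∫ z, g z ∂(ζseq n) - ∫ z, f (T z) ∂(ζseq n)|
            + |∫ z, f (T z) ∂(ζseq n) - ∫ z, f z ∂(ζseq n)|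
            + |∫ z, f z ∂(ζseq n) - ∫ z, f z ∂ζ| := by
              rw [hchain]
              exact abs_add_five_things _ _ _ _ _
        _ ≤ 2 * ‖f‖ * ε + |∫ z, g z ∂ζ - ∫ z, g z ∂(ζseq n)|
            + 2 * ‖f‖ * ε + ‖f‖ * tvDist (Measure.map T (ζseq n)) (ζseq n)
            + |∫ z, f z ∂(ζseq n) - ∫ z, f z ∂ζ| := by
              refine add_le_add (add_le_add (add_le_add (add_le_add hterm1 le_rfl) ?_)
                (hterm4 n)) le_rfl
              rw [abs_sub_comm]; exact hterm3 n
    -- the upper bound tends to 4‖f‖ε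
    have hlim : Tendsto (fun n => 2 * ‖f‖ * ε + |∫ z, g z ∂ζ - ∫ z, g z ∂(ζseq n)|
        + 2 * ‖f‖ * ε + ‖f‖ * tvDist (Measure.map T (ζseq n)) (ζseq n)
        + |∫ z, f z ∂(ζseq n) - ∫ z, f z ∂ζ|) atTop
        (𝓝 (2 * ‖f‖ * ε + 0 + 2 * ‖f‖ * ε + ‖f‖ * 0 + 0)) := by
      have hg_lim : Tendsto (fun n => |∫ z, g z ∂ζ - ∫ z, g z ∂(ζseq n)|) atTop (𝓝 0) := by
        have := (hweak g).const_sub (∫ z, g z ∂ζ)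
        have h0 : (∫ z, g z ∂ζ) - (∫ z, g z ∂ζ) = 0 := sub_self _
        rw [h0] at this
        simpa using this.abs
      have hf_lim : Tendsto (fun n => |∫ z, f z ∂(ζseq n) - ∫ z, f z ∂ζ|) atTop (𝓝 0) := by
        have := (hweak f).sub_const (∫ z, f z ∂ζ)
        rw [sub_self] at this
        simpa using this.abs
      exact ((((tendsto_const_nhds.add hg_lim).add tendsto_const_nhds).add
        (htv.const_mul ‖f‖)).add hf_lim)
    have hlim' : (2 * ‖f‖ * ε + 0 + 2 * ‖f‖ * ε + ‖f‖ * 0 + 0) = 4 * ‖f‖ * ε := by ring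
    have hDle : |D| ≤ 4 * ‖f‖ * ε := by
      rw [← hlim']
      exact ge_of_tendsto hlim (Eventually.of_forall hDn)
    calc |D| ≤ 4 * ‖f‖ * ε := hDle
      _ ≤ (4 * ‖f‖ + 1) * ε := by nlinarith [norm_nonneg f, hε.le]
  -- conclude D = 0
  have hD0 : D = 0 := by
    have hc : (0:ℝ) < 4 * ‖f‖ + 1 := by positivity
    have : |D| ≤ 0 := by
      refine le_of_forall_pos_le_add fun ε hε => ?_
      have := habs (ε / (4 * ‖f‖ + 1)) (by positivity)
      rw [mul_div_cancel₀ _ hc.ne'] at this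
      linarith
    have := abs_nonneg D
    have habs0 : |D| = 0 := le_antisymm ‹|D| ≤ 0› (abs_nonneg D)
    exact abs_eq_zero.mp habs0
  linarith [hD0]
end

section
/- Let G be a second-countable topological group equipped with its Borel σ-algebra, m a Borel measure on G, and Λ ≤ G a countable subgroup that is discrete, i.e. there exists an open neighborhood U₀ of the identity with U₀ ∩ Λ = {1}. Let X ⊆ G be a Borel set with 0 < m(X) < ∞, and let (x_n) be a sequence in G converging to the identity such that m( {g ∈ X : g⁻¹ x_n g ∉ Λ} ) → 0 as n → ∞. Then x_n = 1 for all sufficiently large n. -/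
open MeasureTheory Filter Topology
open scoped ENNReal

theorem eventually_trivial_of_conjugates_in_lattice
    -- G a second-countable topological group with its Borel σ-algebra
    (G : Type*) [Group G] [TopologicalSpace G] [IsTopologicalGroup G]
    [SecondCountableTopology G] [MeasurableSpace G] [BorelSpace G]
    -- m a Borel measure on G
    (m : Measure G)
    -- Λ a countable subgroup which is discrete
    (Λ : Subgroup G) (hΛcount : Countable Λ)
    (U₀ : Set G) (hU₀open : IsOpen U₀) (hU₀1 : (1 : G) ∈ U₀)
    (hU₀Λ : U₀ ∩ (Λ : Set G) = {1})
    -- X a Borel set with 0 < m(X) < ∞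
    (X : Set G) (hX : MeasurableSet X) (hXpos : 0 < m X) (hXfin : m X < ∞)
    -- a sequence converging to the identity whose conjugates land in Λ asymptotically a.e. on X
    (x : ℕ → G) (hx : Tendsto x atTop (𝓝 (1 : G)))
    (hconj : Tendsto (fun n => m {g ∈ X | g⁻¹ * x n * g ∉ (Λ : Set G)}) atTop (𝓝 (0 : ℝ≥0∞))) :
    ∀ᶠ n in atTop, x n = 1 := by
  set B : ℕ → Set G := fun n => {g ∈ X | g⁻¹ * x n * g ∉ U₀} with hB
  have hBmble : ∀ n, MeasurableSet (B n) := by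
    intro n
    have : Continuous fun g : G => g⁻¹ * x n * g := by continuity
    exact hX.inter ((hU₀open.measurableSet.compl).preimage this.measurable)
  have hBtend : Tendsto (fun n => m (B n)) atTop (𝓝 (m (∅ : Set G))) := by
    apply tendsto_measure_of_ae_tendsto_indicator atTop MeasurableSet.empty hBmble hX hXfin.ne
      (Eventually.of_forall fun n => Set.sep_subset _ _)
    refine Eventually.of_forall fun g => ?_
    have hcg : Tendsto (fun n => g⁻¹ * x n * g) atTop (𝓝 (1 : G)) := by
      have : Continuous fun y : G => g⁻¹ * y * g := by continuity
      have := (this.tendsto 1).comp hx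
      simpa [Function.comp_def] using this
    filter_upwards [hcg.eventually (hU₀open.eventually_mem hU₀1)] with n hn
    simp [hB, hn]
  rw [measure_empty] at hBtend
  have hsum : Tendsto (fun n => m {g ∈ X | g⁻¹ * x n * g ∉ (Λ : Set G)} + m (B n)) atTop
      (𝓝 (0 : ℝ≥0∞)) := by simpa using hconj.add hBtend
  filter_upwards [hsum.eventually_lt_const hXpos] with n hn
  have hne : (X \ ({g ∈ X | g⁻¹ * x n * g ∉ (Λ : Set G)} ∪ B n)).Nonempty := by
    rw [Set.nonempty_iff_ne_empty]
    intro h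
    have hsub : X ⊆ {g ∈ X | g⁻¹ * x n * g ∉ (Λ : Set G)} ∪ B n := by
      intro g hg
      by_contra hg'
      exact (Set.eq_empty_iff_forall_notMem.1 h g) ⟨hg, hg'⟩
    have := (measure_mono hsub).trans (measure_union_le (μ := m) _ _)
    exact absurd this (not_le.2 hn)
  obtain ⟨g, hgX, hg⟩ := hne
  rw [Set.mem_union, not_or] at hg
  have h1 : g⁻¹ * x n * g ∈ (Λ : Set G) := by
    by_contra h; exact hg.1 ⟨hgX, h⟩
  have h2 : g⁻¹ * x n * g ∈ U₀ := by
    by_contra h; exact hg.2 ⟨hgX, h⟩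
  have : g⁻¹ * x n * g = 1 := by
    have := hU₀Λ ▸ Set.mem_inter h2 h1
    simpa using this
  have := congrArg (fun y => g * y * g⁻¹) this
  simpa [mul_assoc] using this
end

section
/- Let G be an infinite compact second-countable topological group, m its Haar Borel probability measure (invariant under left and right translations), and d a metric on G inducing its topology which is bi-invariant: d(g x h, g y h) = d(x,y) for all g, h, x, y ∈ G. For n ≥ 1 let A_n = {(x,y) ∈ G × G : d(x,y) < 1/n}; then (m×m)(A_n) > 0, and define ν_n = (m×m)(A_n)⁻¹ · (m×m)|_{A_n}. Then: (i) both marginals of ν_n equal m; (ii) ν_n is invariant under the diagonal G×G-action (g₁,g₂)·(h,k) = (g₁ h g₂⁻¹, g₁ k g₂⁻¹), i.e. the pushforward of ν_n under each such map equals ν_n; (iii) for every bounded continuous f : G × G → ℝ, ∫ f dν_n → ∫ f(x,x) dm(x); and (iv) ν_n(Δ) = 0 for every n, where Δ = {(x,x) : x ∈ G}. -/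
open MeasureTheory Filter Topology
open scoped ENNReal

theorem compact_group_nonrigidity
    -- G an infinite compact second-countable topological group with its Borel σ-algebra
    (G : Type*) [Group G] [TopologicalSpace G] [IsTopologicalGroup G] [CompactSpace G]
    [SecondCountableTopology G] [MeasurableSpace G] [BorelSpace G] [Infinite G]
    -- m the Haar Borel probability measure, invariant under left and right translations
    (m : Measure G) [m.IsHaarMeasure] [IsProbabilityMeasure m]
    (hleft : ∀ g : G, Measure.map (fun z => g * z) m = m)
    (hright : ∀ g : G, Measure.map (fun z => z * g) m = m)
    -- d a bi-invariant metric on G inducing its topology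
    (d : G → G → ℝ)
    (hd_eq : ∀ x y : G, d x y = 0 ↔ x = y)
    (hd_symm : ∀ x y : G, d x y = d y x)
    (hd_tri : ∀ x y z : G, d x z ≤ d x y + d y z)
    (hd_topo : ∀ s : Set G, IsOpen s ↔ ∀ x ∈ s, ∃ ε > 0, ∀ y, d x y < ε → y ∈ s)
    (hd_biinv : ∀ g h x y : G, d (g * x * h) (g * y * h) = d x y)
    -- A_n = {(x,y) : d(x,y) < 1/n} and ν_n the normalized restriction of m × m to A_n
    (A : ℕ → Set (G × G)) (hAdef : ∀ n, A n = {p : G × G | d p.1 p.2 < 1 / (n : ℝ)})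
    (ν : ℕ → Measure (G × G))
    (hνdef : ∀ n, ν n = ((m.prod m) (A n))⁻¹ • ((m.prod m).restrict (A n))) :
    -- (m × m)(A_n) > 0 for n ≥ 1
    (∀ n : ℕ, 1 ≤ n → 0 < (m.prod m) (A n)) ∧
    -- (i) both marginals of ν_n equal m
    (∀ n : ℕ, 1 ≤ n → (ν n).map Prod.fst = m ∧ (ν n).map Prod.snd = m) ∧
    -- (ii) ν_n is invariant under the diagonal left-right action of G × G
    (∀ n : ℕ, 1 ≤ n → ∀ g₁ g₂ : G,
      (ν n).map (fun p : G × G => (g₁ * p.1 * g₂⁻¹, g₁ * p.2 * g₂⁻¹)) = ν n) ∧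
    -- (iii) ν_n converges weakly to the diagonal pushforward of m
    (∀ f : G × G → ℝ, Continuous f → (∃ C, ∀ p, |f p| ≤ C) →
      Tendsto (fun n => ∫ p, f p ∂(ν n)) atTop (𝓝 (∫ x, f (x, x) ∂m))) ∧
    -- (iv) ν_n gives no mass to the diagonal
    (∀ n : ℕ, 1 ≤ n → ν n (Set.diagonal G) = 0) := by
  classical
  have hd_self : ∀ x : G, d x x = 0 := fun x => (hd_eq x x).2 rfl
  have hd_nonneg : ∀ x y : G, 0 ≤ d x y := by
    intro x y
    have h1 := hd_tri x y x
    have h2 := hd_symm y x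
    rw [hd_self] at h1
    linarith
  -- open balls
  have hball_open : ∀ (x₀ : G) (ε : ℝ), IsOpen {y | d x₀ y < ε} := by
    intro x₀ ε
    rw [hd_topo]
    intro x hx
    refine ⟨ε - d x₀ x, by simpa using hx, fun y hy => ?_⟩
    have := hd_tri x₀ x y
    simp only [Set.mem_setOf_eq] at *
    linarith
  -- continuity of the metric
  have hDcont : Continuous fun p : G × G => d p.1 p.2 := by
    rw [continuous_iff_continuousAt]
    intro p
    rw [ContinuousAt, Metric.tendsto_nhds]
    intro ε hε
    have hmem : ({y | d p.1 y < ε / 2} ×ˢ {y | d p.2 y < ε / 2} : Set (G × G)) ∈ 𝓝 p := by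
      refine ((hball_open p.1 (ε / 2)).prod (hball_open p.2 (ε / 2))).mem_nhds ?_
      constructor <;> simp [hd_self, half_pos hε]
    filter_upwards [hmem] with q hq
    obtain ⟨hq1, hq2⟩ := hq
    simp only [Set.mem_setOf_eq] at hq1 hq2
    rw [Real.dist_eq, abs_sub_lt_iff]
    have a1 := hd_tri q.1 p.1 q.2
    have a2 := hd_tri p.1 p.2 q.2
    have b1 := hd_tri p.1 q.1 p.2
    have b2 := hd_tri q.1 q.2 p.2
    have s1 := hd_symm q.1 p.1
    have s2 := hd_symm p.2 q.2
    constructor <;> linarith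
  have hAopen : ∀ n, IsOpen (A n) := by
    intro n
    rw [hAdef n]
    exact isOpen_Iio.preimage hDcont
  have hAmeas : ∀ n, MeasurableSet (A n) := fun n => (hAopen n).measurableSet
  -- the ball around 1
  set B : ℕ → Set G := fun n => {z | d 1 z < 1 / (n : ℝ)} with hBdef
  have hBmeas : ∀ n, MeasurableSet (B n) := fun n => (hball_open 1 _).measurableSet
  have hBpos : ∀ n : ℕ, 1 ≤ n → 0 < m (B n) := by
    intro n hn
    refine (hball_open 1 (1 / (n : ℝ))).measure_pos m ⟨1, ?_⟩
    have : (0 : ℝ) < 1 / (n : ℝ) := by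
      have : (0 : ℝ) < (n : ℝ) := by exact_mod_cast hn
      positivity
    simpa [hBdef, hd_self] using this
  -- slices have constant measure
  have hslice_left : ∀ (n : ℕ) (x : G), m {y | d x y < 1 / (n : ℝ)} = m (B n) := by
    intro n x
    have hpre : {y | d x y < 1 / (n : ℝ)} = (fun y => x⁻¹ * y) ⁻¹' B n := by
      ext y
      have := hd_biinv x⁻¹ 1 x y
      simp only [mul_one, inv_mul_cancel] at this
      simp [hBdef, Set.mem_preimage, this]
    rw [hpre, ← Measure.map_apply (measurable_const_mul x⁻¹) (hBmeas n), hleft x⁻¹]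
  -- key identity : (m × m)(A n) = m (B n)
  have hkey : ∀ n, (m.prod m) (A n) = m (B n) := by
    intro n
    rw [Measure.prod_apply (hAmeas n)]
    have hsec : ∀ x : G, m (Prod.mk x ⁻¹' A n) = m (B n) := by
      intro x
      have : Prod.mk x ⁻¹' A n = {y | d x y < 1 / (n : ℝ)} := by
        ext y; simp [hAdef n]
      rw [this, hslice_left n x]
    rw [lintegral_congr hsec, lintegral_const, measure_univ, mul_one]
  have hkey_ne_top : ∀ n, (m.prod m) (A n) ≠ ∞ := by
    intro n
    exact (measure_lt_top (m.prod m) (A n)).ne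
  have hkey_ne_zero : ∀ n : ℕ, 1 ≤ n → (m.prod m) (A n) ≠ 0 := by
    intro n hn
    rw [hkey n]
    exact (hBpos n hn).ne'
  -- part 0
  have hApos : ∀ n : ℕ, 1 ≤ n → 0 < (m.prod m) (A n) := by
    intro n hn
    exact (hkey_ne_zero n hn).bot_lt
  -- total mass
  have hν_univ : ∀ n : ℕ, 1 ≤ n → ν n Set.univ = 1 := by
    intro n hn
    rw [hνdef n]
    simp only [Measure.smul_apply, Measure.restrict_apply_univ, smul_eq_mul]
    exact ENNReal.inv_mul_cancel (hkey_ne_zero n hn) (hkey_ne_top n)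
  have hprob : ∀ n : ℕ, 1 ≤ n → IsProbabilityMeasure (ν n) := fun n hn => ⟨hν_univ n hn⟩
  -- first marginal of the restricted measure
  have hfst_restrict : ∀ n, ((m.prod m).restrict (A n)).map Prod.fst = m (B n) • m := by
    intro n
    ext s hs
    rw [Measure.map_apply measurable_fst hs,
      Measure.restrict_apply (measurable_fst hs),
      Measure.prod_apply ((measurable_fst hs).inter (hAmeas n))]
    have hsec : ∀ x : G, m (Prod.mk x ⁻¹' (Prod.fst ⁻¹' s ∩ A n))
        = s.indicator (fun _ => m (B n)) x := by
      intro x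
      by_cases hx : x ∈ s
      · have : Prod.mk x ⁻¹' (Prod.fst ⁻¹' s ∩ A n) = {y | d x y < 1 / (n : ℝ)} := by
          ext y; simp [hAdef n, hx]
        rw [this, hslice_left n x, Set.indicator_of_mem hx]
      · have : Prod.mk x ⁻¹' (Prod.fst ⁻¹' s ∩ A n) = ∅ := by
          ext y; simp [hAdef n, hx]
        rw [this, measure_empty, Set.indicator_of_notMem hx]
    rw [lintegral_congr hsec, lintegral_indicator hs, setLIntegral_const,
      Measure.smul_apply, smul_eq_mul]
  have hmarg_fst : ∀ n : ℕ, 1 ≤ n → (ν n).map Prod.fst = m := by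
    intro n hn
    rw [hνdef n, Measure.map_smul, hfst_restrict n, hkey n, smul_smul,
      ENNReal.inv_mul_cancel (hBpos n hn).ne' (measure_lt_top m (B n)).ne, one_smul]
  -- swap invariance
  have hswap : ∀ n, ((m.prod m).restrict (A n)).map Prod.swap = (m.prod m).restrict (A n) := by
    intro n
    have hpre : Prod.swap ⁻¹' A n = A n := by
      ext p
      simp only [hAdef n, Set.mem_preimage, Set.mem_setOf_eq, Prod.fst_swap, Prod.snd_swap]
      rw [hd_symm]
    calc ((m.prod m).restrict (A n)).map Prod.swap
        = ((m.prod m).restrict (Prod.swap ⁻¹' A n)).map Prod.swap := by rw [hpre]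
      _ = ((m.prod m).map Prod.swap).restrict (A n) :=
          (Measure.restrict_map measurable_swap (hAmeas n)).symm
      _ = (m.prod m).restrict (A n) := by rw [Measure.prod_swap]
  have hmarg_snd : ∀ n : ℕ, 1 ≤ n → (ν n).map Prod.snd = m := by
    intro n hn
    have : (ν n).map Prod.snd = ((ν n).map Prod.swap).map Prod.fst := by
      rw [Measure.map_map measurable_fst measurable_swap]
      rfl
    rw [this, hνdef n, Measure.map_smul, hswap n, ← hνdef n, hmarg_fst n hn]
  -- (ii) invariance
  have hinv : ∀ n : ℕ, 1 ≤ n → ∀ g₁ g₂ : G,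
      (ν n).map (fun p : G × G => (g₁ * p.1 * g₂⁻¹, g₁ * p.2 * g₂⁻¹)) = ν n := by
    intro n _ g₁ g₂
    set φ : G → G := fun z => g₁ * z * g₂⁻¹ with hφdef
    have hφmeas : Measurable φ := (measurable_id.const_mul g₁).mul_const g₂⁻¹
    have hφmap : m.map φ = m := by
      have : φ = (fun z => z * g₂⁻¹) ∘ (fun z => g₁ * z) := rfl
      rw [this, ← Measure.map_map (measurable_mul_const g₂⁻¹) (measurable_const_mul g₁),
        hleft g₁, hright g₂⁻¹]
    have hT : (fun p : G × G => (g₁ * p.1 * g₂⁻¹, g₁ * p.2 * g₂⁻¹)) = Prod.map φ φ := rfl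
    have hTmeas : Measurable (Prod.map φ φ) := hφmeas.prodMap hφmeas
    have hTprod : (m.prod m).map (Prod.map φ φ) = m.prod m := by
      rw [← Measure.map_prod_map m m hφmeas hφmeas, hφmap]
    have hTpre : Prod.map φ φ ⁻¹' A n = A n := by
      ext p
      simp only [hAdef n, Set.mem_preimage, Set.mem_setOf_eq, Prod.map_apply]
      show d (g₁ * p.1 * g₂⁻¹) (g₁ * p.2 * g₂⁻¹) < 1 / (n : ℝ) ↔ _
      rw [hd_biinv]
    rw [hT, hνdef n, Measure.map_smul]
    calc ((m.prod m) (A n))⁻¹ • ((m.prod m).restrict (A n)).map (Prod.map φ φ)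
        = ((m.prod m) (A n))⁻¹ • ((m.prod m).restrict (Prod.map φ φ ⁻¹' A n)).map (Prod.map φ φ) := by
          rw [hTpre]
      _ = ((m.prod m) (A n))⁻¹ • ((m.prod m).map (Prod.map φ φ)).restrict (A n) := by
          rw [Measure.restrict_map hTmeas (hAmeas n)]
      _ = ((m.prod m) (A n))⁻¹ • (m.prod m).restrict (A n) := by rw [hTprod]
  -- singletons are null
  have hsing_meas : ∀ x : G, MeasurableSet ({x} : Set G) := by
    intro x
    have hc : Continuous fun y : G => d x y :=
      hDcont.comp (continuous_const.prodMk continuous_id)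
    have : ({x} : Set G) = (fun y => d x y) ⁻¹' {0} := by
      ext y
      simp [eq_comm, ← hd_eq x y]
    rw [this]
    exact (isClosed_singleton.preimage hc).measurableSet
  have hsing : ∀ x : G, m {x} = 0 := by
    have h1 : ∀ x : G, m {x} = m {1} := by
      intro x
      conv_lhs => rw [← hleft x]
      rw [Measure.map_apply (measurable_const_mul x) (hsing_meas x)]
      congr 1
      ext z
      simp [mul_eq_left]
    intro x
    rw [h1 x]
    by_contra hne
    have e := Infinite.natEmbedding G
    have hdisj : Pairwise (Function.onFun Disjoint fun i : ℕ => ({e i} : Set G)) := by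
      intro i j hij
      simp [Function.onFun, Set.disjoint_singleton, e.injective.ne hij]
    have hU : m (⋃ i : ℕ, ({e i} : Set G)) = ∑' i : ℕ, m {e i} :=
      measure_iUnion hdisj fun i => hsing_meas (e i)
    have htop : (∑' _ : ℕ, m {(1 : G)}) = ∞ := ENNReal.tsum_const_eq_top_of_ne_zero hne
    have : m (⋃ i : ℕ, ({e i} : Set G)) = ∞ := by
      rw [hU]
      simp_rw [h1]
      exact htop
    exact (measure_lt_top m _).ne this
  -- diagonal is null for m × m
  have hdiag_meas : MeasurableSet (Set.diagonal G) := by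
    have : Set.diagonal G = (fun p : G × G => d p.1 p.2) ⁻¹' {0} := by
      ext p
      simp [Set.mem_diagonal_iff, hd_eq p.1 p.2, eq_comm]
    rw [this]
    exact (isClosed_singleton.preimage hDcont).measurableSet
  have hdiag0 : (m.prod m) (Set.diagonal G) = 0 := by
    rw [Measure.prod_apply hdiag_meas]
    have : ∀ x : G, m (Prod.mk x ⁻¹' Set.diagonal G) = 0 := by
      intro x
      have : Prod.mk x ⁻¹' Set.diagonal G = {x} := by
        ext y
        simp [Set.mem_diagonal_iff, eq_comm]
      rw [this, hsing x]
    rw [lintegral_congr this, lintegral_zero]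
  have hν_diag : ∀ n : ℕ, 1 ≤ n → ν n (Set.diagonal G) = 0 := by
    intro n _
    rw [hνdef n]
    simp only [Measure.smul_apply, Measure.restrict_apply hdiag_meas, smul_eq_mul]
    have : (m.prod m) (Set.diagonal G ∩ A n) = 0 :=
      le_antisymm (hdiag0 ▸ measure_mono Set.inter_subset_left) zero_le
    rw [this, mul_zero]
  -- ν n lives on A n
  have hν_compl : ∀ n, ν n (A n)ᶜ = 0 := by
    intro n
    rw [hνdef n]
    simp [Measure.restrict_apply (hAmeas n).compl]
  -- (iii) weak convergence
  have hconv : ∀ f : G × G → ℝ, Continuous f → (∃ C, ∀ p, |f p| ≤ C) →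
      Tendsto (fun n => ∫ p, f p ∂(ν n)) atTop (𝓝 (∫ x, f (x, x) ∂m)) := by
    intro f hf ⟨C, hC⟩
    set g : G → ℝ := fun x => f (x, x) with hgdef
    have hgcont : Continuous g := hf.comp (continuous_id.prodMk continuous_id)
    -- uniform continuity along the diagonal
    have hunif : ∀ ε : ℝ, 0 < ε → ∃ δ : ℝ, 0 < δ ∧
        ∀ p : G × G, d p.1 p.2 < δ → |f p - g p.1| ≤ ε := by
      intro ε hε
      set h : G × G → ℝ := fun p => f p - g p.1 with hhdef
      have hhcont : Continuous h := hf.sub (hgcont.comp continuous_fst)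
      set K : Set (G × G) := {p | ε ≤ |h p|} with hKdef
      have hKclosed : IsClosed K := isClosed_le continuous_const hhcont.abs
      by_cases hK : K.Nonempty
      · obtain ⟨p₀, hp₀K, hp₀min⟩ := hKclosed.isCompact.exists_isMinOn hK hDcont.continuousOn
        have hp₀ne : p₀.1 ≠ p₀.2 := by
          intro hcon
          have hzero : h p₀ = 0 := by
            show f p₀ - f (p₀.1, p₀.1) = 0
            have hpe : p₀ = (p₀.1, p₀.1) := by
              rw [Prod.ext_iff]
              exact ⟨rfl, hcon.symm⟩
            rw [← hpe]
            exact sub_self _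
          have hεK := hp₀K
          rw [hKdef, Set.mem_setOf_eq, hzero, abs_zero] at hεK
          linarith
        have hδpos : 0 < d p₀.1 p₀.2 :=
          lt_of_le_of_ne (hd_nonneg _ _) (fun hc => hp₀ne ((hd_eq _ _).1 hc.symm))
        refine ⟨d p₀.1 p₀.2, hδpos, fun p hp => ?_⟩
        by_contra hcontra
        have hpK : p ∈ K := le_of_lt (lt_of_not_ge hcontra)
        exact absurd (isMinOn_iff.1 hp₀min p hpK) (not_le.2 hp)
      · refine ⟨1, one_pos, fun p _ => ?_⟩
        have : p ∉ K := fun hp => hK ⟨p, hp⟩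
        exact le_of_lt (lt_of_not_ge this)
    rw [Metric.tendsto_atTop]
    intro ε hε
    obtain ⟨δ, hδpos, hδ⟩ := hunif (ε / 2) (half_pos hε)
    obtain ⟨k, hk⟩ := exists_nat_one_div_lt hδpos
    refine ⟨k + 1, fun n hn => ?_⟩
    have hn1 : 1 ≤ n := le_trans (Nat.le_add_left 1 k) hn
    haveI := hprob n hn1
    -- rewrite the limit integral over ν n
    have hmap : ∫ x, g x ∂m = ∫ p, g p.1 ∂(ν n) := by
      rw [← hmarg_fst n hn1]
      exact integral_map measurable_fst.aemeasurable hgcont.aestronglyMeasurable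
    have hint_f : Integrable f (ν n) := by
      refine (integrable_const C).mono' hf.aestronglyMeasurable ?_
      exact ae_of_all _ fun p => by simpa [Real.norm_eq_abs] using hC p
    have hint_g : Integrable (fun p : G × G => g p.1) (ν n) := by
      refine (integrable_const C).mono' (hgcont.comp continuous_fst).aestronglyMeasurable ?_
      exact ae_of_all _ fun p => by simpa [Real.norm_eq_abs, hgdef] using hC (p.1, p.1)
    have hae : ∀ᵐ p ∂(ν n), p ∈ A n := by
      rw [ae_iff]
      have : {p : G × G | ¬ p ∈ A n} = (A n)ᶜ := rfl
      rw [this]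
      exact hν_compl n
    have hbound : ∀ᵐ p ∂(ν n), ‖f p - g p.1‖ ≤ ε / 2 := by
      filter_upwards [hae] with p hp
      rw [hAdef n] at hp
      have h1n : (1 : ℝ) / n < δ := by
        have hkn : (1 : ℝ) / n ≤ 1 / (k + 1 : ℝ) := by
          apply one_div_le_one_div_of_le
          · positivity
          · exact_mod_cast hn
        linarith
      rw [Real.norm_eq_abs]
      exact hδ p (lt_trans hp h1n)
    have hnorm : ‖∫ p, (f p - g p.1) ∂(ν n)‖ ≤ ε / 2 * ((ν n) Set.univ).toReal :=
      norm_integral_le_of_norm_le_const hbound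
    rw [hν_univ n hn1] at hnorm
    simp only [ENNReal.toReal_one, mul_one] at hnorm
    rw [Real.dist_eq]
    have hsub : ∫ p, f p ∂(ν n) - ∫ x, g x ∂m = ∫ p, (f p - g p.1) ∂(ν n) := by
      rw [hmap, integral_sub hint_f hint_g]
    calc |∫ p, f p ∂(ν n) - ∫ x, f (x, x) ∂m|
        = ‖∫ p, (f p - g p.1) ∂(ν n)‖ := by rw [← Real.norm_eq_abs, ← hsub]
      _ ≤ ε / 2 := hnorm
      _ < ε := half_lt_self hε
  exact ⟨hApos, fun n hn => ⟨hmarg_fst n hn, hmarg_snd n hn⟩, hinv, hconv, hν_diag⟩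
end
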